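/- arXiv:1810.09651 — 10 statements merged into one kernel-verified Lean document; each statement's English description precedes it below -/
import Mathlib

section
/- Let N > 1 be an integer and let a be a unit of ℤ/Nℤ. Then N is prime if and only if the equality (x + a)^N = x^N + a holds in the polynomial ring (ℤ/Nℤ)[x]. -/
open Polynomial

lemma aux_prime_of_dvd_choose (N : ℕ) (hN : 1 < N)
    (h : ∀ k, 0 < k → k < N → N ∣ N.choose k) : N.Prime := by
  by_contra hnp
  set p := N.minFac with hp_def
  have hp : p.Prime := Nat.minFac_prime (by omega)
  haveI : Fact p.Prime := ⟨hp⟩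
  have hpN : p ∣ N := Nat.minFac_dvd N
  have hplt : p < N :=
    lt_of_le_of_ne (Nat.minFac_le (by omega)) (fun he => hnp (he ▸ hp))
  set e := N.factorization p with he_def
  have hed : p ^ e ∣ N := Nat.ordProj_dvd N p
  set m := N / p ^ e with hm_def
  have hNm : N = p ^ e * m := (Nat.mul_div_cancel' hed).symm
  have hpm : ¬ p ∣ m := Nat.not_dvd_ordCompl hp (by omega)
  have hm1 : 1 ≤ m := by
    rcases Nat.eq_zero_or_pos m with h0 | h1
    · rw [h0, mul_zero] at hNm; omega
    · exact h1
  rcases eq_or_lt_of_le hm1 with hm | hm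
  · -- m = 1, so N = p ^ e with e ≥ 2
    have hNpe : N = p ^ e := by rw [hNm, ← hm, mul_one]
    have he2 : 2 ≤ e := by
      rcases Nat.lt_or_ge e 2 with hh | hh
      · interval_cases e
        · rw [pow_zero] at hNpe; omega
        · rw [pow_one] at hNpe; omega
      · exact hh
    have hdvd : N ∣ N.choose p := h p hp.pos hplt
    have hdvd' : p ^ e ∣ (p ^ e).choose p := by rw [← hNpe]; exact hNpe ▸ hdvd
    have hle : (e : ℕ∞) ≤ emultiplicity p ((p ^ e).choose p) :=
      pow_dvd_iff_le_emultiplicity.mp hdvd'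
    have heq : emultiplicity p ((p ^ e).choose p) = ((e - multiplicity p p : ℕ) : ℕ∞) :=
      Nat.Prime.emultiplicity_choose_prime_pow hp (hNpe ▸ hplt.le) hp.pos.ne'
    rw [heq, multiplicity_self] at hle
    have : e ≤ e - 1 := by exact_mod_cast hle
    omega
  · -- m > 1, use k = p ^ e and Lucas
    have hpe_pos : 0 < p ^ e := pow_pos hp.pos e
    have hpelt : p ^ e < N := by
      calc p ^ e = p ^ e * 1 := (mul_one _).symm
      _ < p ^ e * m := (Nat.mul_lt_mul_left hpe_pos).mpr hm
      _ = N := hNm.symm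
    have hdvd : N ∣ N.choose (p ^ e) := h _ hpe_pos hpelt
    have hpdvd : p ∣ N.choose (p ^ e) := dvd_trans hpN hdvd
    have ha1 : N < p ^ N := Nat.lt_pow_self (n := N) hp.one_lt
    have ha2 : p ^ e < p ^ N := lt_of_lt_of_le hpelt ha1.le
    have heN : e < N := lt_of_lt_of_le (Nat.lt_pow_self (n := e) hp.one_lt)
      (Nat.le_of_dvd (by omega) hed)
    have hlucas := Choose.choose_modEq_prod_range_choose_nat (p := p)
      (n := N) (k := p ^ e) ha1 ha2
    have hprod : ∀ i ∈ Finset.range N,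
        Nat.choose (N / p ^ i % p) (p ^ e / p ^ i % p)
          = if i = e then N / p ^ e % p else 1 := by
      intro i _
      rcases lt_trichotomy i e with hie | hie | hie
      · have h1 : p ^ e / p ^ i % p = 0 := by
          rw [Nat.pow_div hie.le hp.pos]
          exact Nat.mod_eq_zero_of_dvd (dvd_pow_self p (by omega))
        rw [h1, Nat.choose_zero_right, if_neg hie.ne]
      · rw [hie, Nat.div_self hpe_pos, Nat.mod_eq_of_lt hp.one_lt,
          Nat.choose_one_right, if_pos rfl]
      · have h1 : p ^ e / p ^ i % p = 0 := by
          rw [Nat.div_eq_of_lt (Nat.pow_lt_pow_right hp.one_lt hie), Nat.zero_mod]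
        rw [h1, Nat.choose_zero_right, if_neg hie.ne']
    have hprodeq : (∏ i ∈ Finset.range N,
        Nat.choose (N / p ^ i % p) (p ^ e / p ^ i % p)) = N / p ^ e % p := by
      rw [Finset.prod_congr rfl hprod,
        Finset.prod_ite_eq' (Finset.range N) e (fun _ => N / p ^ e % p)]
      rw [if_pos (Finset.mem_range.mpr heN)]
    rw [hprodeq] at hlucas
    have h0 : N.choose (p ^ e) % p = 0 := Nat.mod_eq_zero_of_dvd hpdvd
    have hmp : N / p ^ e % p = 0 := by
      have h1 : N.choose (p ^ e) % p = (N / p ^ e % p) % p := hlucas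
      rw [Nat.mod_mod_of_dvd _ dvd_rfl] at h1
      rw [← h1, h0]
    exact hpm (by rw [hm_def]; exact Nat.dvd_of_mod_eq_zero hmp)

/-- An integer `N > 1` is prime if and only if, for any unit `a` of `ℤ/Nℤ`,
`(x + a)^N = x^N + a` holds in `(ℤ/Nℤ)[x]`. -/
theorem stmt_0 (N : ℕ) (hN : 1 < N) (a : (ZMod N)ˣ) :
    N.Prime ↔ (X + C (a : ZMod N)) ^ N = X ^ N + C (a : ZMod N) := by
  haveI : NeZero N := ⟨by omega⟩
  constructor
  · intro hp
    haveI : Fact N.Prime := ⟨hp⟩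
    rw [add_pow_char, ← C_pow, ZMod.pow_card]
  · intro h
    apply aux_prime_of_dvd_choose N hN
    intro k hk0 hkN
    have hc := congrArg (fun q => Polynomial.coeff q k) h
    simp only [coeff_X_add_C_pow, coeff_add, coeff_X_pow, coeff_C,
      if_neg hkN.ne, if_neg hk0.ne'] at hc
    rw [add_zero] at hc
    have h2 : ((a : ZMod N)) ^ (N - k) * (N.choose k : ZMod N) = 0 := hc
    rw [← Units.val_pow_eq_pow_val, Units.mul_right_eq_zero] at h2
    exact (ZMod.natCast_eq_zero_iff _ _).mp h2
end

section
/- Let N > 1 be a composite integer, let p be a prime dividing N such that N is not a power of p, and let f ∈ (ℤ/pℤ)[x] be irreducible. Then the number of polynomials h ∈ (ℤ/pℤ)[x] with deg h < deg f such that (h(x) + 1)^N ≡ h(x)^N + 1 (mod f(x)) in (ℤ/pℤ)[x] is less than N. -/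
open Polynomial

/-- Let `N > 1` be composite, `p` a prime dividing `N` with `N` not a power of `p`, and
`f ∈ (ℤ/pℤ)[x]` irreducible. The number of polynomials `h` with `deg h < deg f` such that
`(h+1)^N ≡ h^N + 1 (mod f)` in `(ℤ/pℤ)[x]` is less than `N`. -/
theorem stmt_3 (N : ℕ) (hN : 1 < N) (hcomp : ¬ N.Prime) (p : ℕ) (hp : p.Prime)
    (hpN : p ∣ N) (hpow : ∀ k : ℕ, N ≠ p ^ k)
    (f : Polynomial (ZMod p)) (hf : Irreducible f) :
    {h : Polynomial (ZMod p) |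
      h.degree < f.degree ∧ f ∣ ((h + 1) ^ N - (h ^ N + 1))}.ncard < N := by
  haveI : Fact p.Prime := ⟨hp⟩
  haveI : Fact (Irreducible f) := ⟨hf⟩
  set K := AdjoinRoot f
  have hNne : N ≠ 0 := by omega
  -- decompose N = p ^ a * m with p ∤ m, 2 ≤ m
  set a := N.factorization p with ha
  set m := N / p ^ a with hm
  have hNm : p ^ a * m = N := Nat.ordProj_mul_ordCompl_eq_self N p
  have hpm : ¬ p ∣ m := Nat.not_dvd_ordCompl hp hNne
  have hm2 : 2 ≤ m := by
    rcases Nat.lt_or_ge m 2 with h | h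
    · interval_cases m
      · omega
      · exact absurd (hpow a) (by simpa using hNm.symm)
    · exact h
  have hpa0 : 0 < p ^ a := Nat.pow_pos hp.pos
  -- characteristic of K is p
  haveI : CharP K p :=
    charP_of_injective_algebraMap (algebraMap (ZMod p) K).injective p
  -- the polynomial g₀ = (X+1)^m - (X^m + 1)
  set g0 : K[X] := (X + 1) ^ m - (X ^ m + 1) with hg0
  have hcoeff : g0.coeff (m - 1) = (m : K) := by
    have h1 : ((X + 1 : K[X]) ^ m).coeff (m - 1) = (m.choose (m - 1) : K) :=
      coeff_X_add_one_pow K m (m - 1)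
    have h2 : ((X : K[X]) ^ m + 1).coeff (m - 1) = 0 := by
      rw [coeff_add, coeff_X_pow, coeff_one, if_neg (by omega), if_neg (by omega), add_zero]
    have h3 : m.choose (m - 1) = m := by
      have := Nat.choose_symm (n := m) (k := 1) (by omega)
      simpa [Nat.choose_one_right] using this
    rw [hg0, coeff_sub, h1, h2, h3, sub_zero]
  have hmK : (m : K) ≠ 0 := by
    simpa [CharP.cast_eq_zero_iff K p m] using hpm
  have hg0ne : g0 ≠ 0 := fun h => hmK (by rw [← hcoeff, h, coeff_zero])
  have hmono1 : ((X + 1 : K[X]) ^ m).Monic := by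
    have := (monic_X_add_C (1 : K)).pow (n := m)
    simpa using this
  have hmono2 : ((X : K[X]) ^ m + 1).Monic := by
    apply (monic_X_pow m).add_of_left
    refine lt_of_le_of_lt degree_one_le ?_
    rw [degree_X_pow]
    exact_mod_cast (by omega : 0 < m)
  have hdeg1 : ((X + 1 : K[X]) ^ m).degree = (m : WithBot ℕ) := by
    have hx : (X + 1 : K[X]) = X + C 1 := by simp
    rw [hx, degree_pow, degree_X_add_C]
    simp
  have hdeg2 : ((X : K[X]) ^ m + 1).degree = (m : WithBot ℕ) := by
    rw [degree_add_eq_left_of_degree_lt, degree_X_pow]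
    rw [degree_X_pow]
    refine lt_of_le_of_lt degree_one_le ?_
    exact_mod_cast (by omega : 0 < m)
  have hg0deg : g0.degree < (m : WithBot ℕ) := by
    have := degree_sub_lt (hdeg1.trans hdeg2.symm) hmono1.ne_zero
      (hmono1.leadingCoeff.trans hmono2.leadingCoeff.symm)
    rwa [hdeg1] at this
  have hg0nat : g0.natDegree ≤ m - 1 := by
    have := (natDegree_lt_iff_degree_lt hg0ne).mpr hg0deg
    omega
  -- the composed polynomial G = (X+1)^N - (X^N + 1)
  set G : K[X] := g0.comp (X ^ p ^ a) with hG
  have hGeq : G = (X + 1) ^ N - (X ^ N + 1) := by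
    have hfrob : ((X : K[X]) ^ p ^ a + 1) = (X + 1) ^ p ^ a := by
      rw [add_pow_char_pow]; simp
    rw [hG, hg0]
    simp only [sub_comp, add_comp, pow_comp, X_comp, one_comp]
    rw [hfrob, ← pow_mul, ← pow_mul, hNm]
  have hGne : G ≠ 0 := by
    have hq : ((X : K[X]) ^ p ^ a).natDegree ≠ 0 := by
      rw [natDegree_X_pow]; omega
    have hlc := leadingCoeff_comp (p := g0) (q := X ^ p ^ a) hq
    rw [(monic_X_pow (p ^ a)).leadingCoeff, one_pow, mul_one] at hlc
    intro h
    rw [hG] at h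
    rw [h, leadingCoeff_zero] at hlc
    exact hg0ne (leadingCoeff_eq_zero.mp hlc.symm)
  have hGdeg : G.natDegree < N := by
    rw [hG, natDegree_comp, natDegree_X_pow]
    calc g0.natDegree * p ^ a ≤ (m - 1) * p ^ a := Nat.mul_le_mul_right _ hg0nat
      _ < m * p ^ a := by
          exact (Nat.mul_lt_mul_right hpa0).mpr (by omega)
      _ = N := by rw [Nat.mul_comm]; exact hNm
  -- injection into roots of G
  have hle : {h : Polynomial (ZMod p) |
      h.degree < f.degree ∧ f ∣ ((h + 1) ^ N - (h ^ N + 1))}.ncard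
      ≤ {x : K | G.IsRoot x}.ncard := by
    refine Set.ncard_le_ncard_of_injOn (fun h => AdjoinRoot.mk f h) ?_ ?_
      (Polynomial.finite_setOf_isRoot hGne)
    · rintro h ⟨-, hdvd⟩
      show G.IsRoot _
      rw [hGeq]
      simp only [IsRoot, eval_sub, eval_pow, eval_add, eval_X, eval_one]
      rw [← map_one (AdjoinRoot.mk f), ← map_add, ← map_pow, ← map_pow, ← map_add, ← map_sub]
      exact AdjoinRoot.mk_eq_zero.mpr hdvd
    · rintro h1 ⟨hd1, -⟩ h2 ⟨hd2, -⟩ heq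
      by_contra hne
      have hsub : f ∣ h1 - h2 := AdjoinRoot.mk_eq_mk.mp heq
      have hne' : h1 - h2 ≠ 0 := sub_ne_zero.mpr hne
      have := Polynomial.degree_le_of_dvd hsub hne'
      have hlt : (h1 - h2).degree < f.degree :=
        lt_of_le_of_lt (degree_sub_le h1 h2) (max_lt hd1 hd2)
      exact absurd this (not_le.mpr hlt)
  have hroot : {x : K | G.IsRoot x}.ncard ≤ G.natDegree := by
    have hset : {x : K | G.IsRoot x} = ↑G.roots.toFinset := by
      ext x
      simp [Multiset.mem_toFinset, mem_roots hGne, IsRoot]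
    rw [hset, Set.ncard_coe_finset]
    exact le_trans (Multiset.toFinset_card_le _) (Polynomial.card_roots' G)
  omega
end

section
/- Let N > 1 be a composite integer and let p be a prime dividing N such that N is not a power of p. Let f ∈ (ℤ/Nℤ)[x] be a monic polynomial of degree D ≥ 1 whose reduction modulo p is irreducible in (ℤ/pℤ)[x]. Then the number M of polynomials h ∈ (ℤ/Nℤ)[x] with deg h < D such that (h(x) + 1)^N ≡ h(x)^N + 1 (mod f(x)) in (ℤ/Nℤ)[x] satisfies M · p^D < N^{D+1}; equivalently, a uniformly random polynomial h of degree less than D over ℤ/Nℤ satisfies the congruence with probability less than N / p^D. -/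
open Polynomial

/-- Let `N > 1` be composite, `p` a prime dividing `N` with `N` not a power of `p`, and
`f ∈ (ℤ/Nℤ)[x]` monic of degree `D ≥ 1` whose reduction mod `p` is irreducible. Then the
number `M` of polynomials `h ∈ (ℤ/Nℤ)[x]` with `deg h < D` such that
`(h+1)^N ≡ h^N + 1 (mod f)` satisfies `M * p^D < N^(D+1)`. -/
theorem stmt_4 (N : ℕ) (hN : 1 < N) (hcomp : ¬ N.Prime) (p : ℕ) (hp : p.Prime)
    (hpN : p ∣ N) (hpow : ∀ k : ℕ, N ≠ p ^ k)
    (D : ℕ) (hD : 1 ≤ D) (f : Polynomial (ZMod N)) (hmonic : f.Monic)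
    (hdeg : f.natDegree = D)
    (hirr : Irreducible (f.map (ZMod.castHom hpN (ZMod p)))) :
    {h : Polynomial (ZMod N) |
      h.degree < (D : WithBot ℕ) ∧ f ∣ ((h + 1) ^ N - (h ^ N + 1))}.ncard * p ^ D
      < N ^ (D + 1) := by
  classical
  have hN0 : N ≠ 0 := by omega
  haveI : NeZero N := ⟨hN0⟩
  haveI : Fact p.Prime := ⟨hp⟩
  haveI : NeZero p := ⟨hp.ne_zero⟩
  set A : Set (Polynomial (ZMod N)) := {h : Polynomial (ZMod N) |
      h.degree < (D : WithBot ℕ) ∧ f ∣ ((h + 1) ^ N - (h ^ N + 1))} with hAdef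
  set φ : ZMod N →+* ZMod p := ZMod.castHom hpN (ZMod p) with hφdef
  set q : ℕ := N / p with hqdef
  have hpq : p * q = N := Nat.mul_div_cancel' hpN
  -- the reduction of `f` mod `p`
  set fb : Polynomial (ZMod p) := f.map φ with hfbdef
  have hfbm : fb.Monic := hmonic.map φ
  have hfbd : fb.natDegree = D := by rw [hfbdef, hmonic.natDegree_map, hdeg]
  have hfbdeg : fb.degree = (D : WithBot ℕ) := by
    rw [← hfbd]; exact degree_eq_natDegree hfbm.ne_zero
  haveI : Fact (Irreducible fb) := ⟨hirr⟩
  set ρ : Polynomial (ZMod p) →+* AdjoinRoot fb := AdjoinRoot.mk fb with hρdef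
  -- the auxiliary polynomial `gP = (X+1)^N - (X^N + 1)` over `ZMod p` is nonzero
  set a : ℕ := N.factorization p with hadef
  set m : ℕ := N / p ^ a with hmdef
  have hNam : p ^ a * m = N := Nat.ordProj_mul_ordCompl_eq_self N p
  have hpm : ¬ p ∣ m := Nat.not_dvd_ordCompl hp hN0
  have hpa0 : 0 < p ^ a := pow_pos hp.pos a
  have hm2 : 2 ≤ m := by
    rcases Nat.lt_or_ge m 2 with h | h
    · interval_cases m
      · omega
      · exact absurd (by omega : N = p ^ a) (hpow a)
    · exact h
  set gP : Polynomial (ZMod p) := (X + 1) ^ N - (X ^ N + 1) with hgPdef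
  have hfrob : ((X + 1 : Polynomial (ZMod p))) ^ (p ^ a) = X ^ (p ^ a) + 1 := by
    have := add_pow_char_pow (R := Polynomial (ZMod p)) (p := p) (n := a)
      (x := (X : Polynomial (ZMod p))) (y := 1)
    simpa using this
  have hexp : ((X + 1 : Polynomial (ZMod p))) ^ N
      = Polynomial.expand (ZMod p) (p ^ a) ((X + 1) ^ m) := by
    rw [map_pow, map_add, expand_X, map_one, ← hfrob, ← pow_mul, hNam]
  have hcoeff1 : (((X + 1 : Polynomial (ZMod p))) ^ N).coeff (p ^ a * (m - 1))
      = (m : ZMod p) := by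
    rw [hexp, Polynomial.coeff_expand_mul' hpa0, coeff_X_add_one_pow]
    congr 1
    calc m.choose (m - 1) = m.choose 1 := Nat.choose_symm (by omega)
      _ = m := Nat.choose_one_right m
  have hkN : p ^ a * (m - 1) ≠ N := by
    rw [← hNam]
    intro hcon
    have := Nat.eq_of_mul_eq_mul_left hpa0 hcon
    omega
  have hkne0 : p ^ a * (m - 1) ≠ 0 := Nat.mul_ne_zero (by omega) (by omega)
  have hcoeff2 : ((X ^ N + 1 : Polynomial (ZMod p))).coeff (p ^ a * (m - 1)) = 0 := by
    rw [coeff_add, coeff_X_pow, coeff_one, if_neg hkN, if_neg hkne0, add_zero]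
  have hgPcoeff : gP.coeff (p ^ a * (m - 1)) = (m : ZMod p) := by
    rw [hgPdef, coeff_sub, hcoeff1, hcoeff2, sub_zero]
  have hmzero : (m : ZMod p) ≠ 0 := by
    rw [Ne, ZMod.natCast_eq_zero_iff]; exact hpm
  have hgP0 : gP ≠ 0 := by
    intro h
    exact hmzero (by rw [← hgPcoeff, h, coeff_zero])
  -- degree bound on gP
  have hmon1 : ((X + 1 : Polynomial (ZMod p))).Monic := by
    simpa using monic_X_add_C (1 : ZMod p)
  have hnd1 : ((X + 1 : Polynomial (ZMod p))).natDegree = 1 := by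
    simpa using natDegree_X_add_C (1 : ZMod p)
  have hmonA : (((X + 1 : Polynomial (ZMod p))) ^ N).Monic := hmon1.pow N
  have hdegA : (((X + 1 : Polynomial (ZMod p))) ^ N).natDegree = N := by
    rw [hmon1.natDegree_pow, hnd1, mul_one]
  have hmonB : ((X ^ N + 1 : Polynomial (ZMod p))).Monic := by
    simpa using monic_X_pow_add_C (1 : ZMod p) (by omega : N ≠ 0)
  have hdegB : ((X ^ N + 1 : Polynomial (ZMod p))).natDegree = N := by
    simpa using natDegree_X_pow_add_C (n := N) (r := (1 : ZMod p))
  have hdlt : gP.degree < (N : WithBot ℕ) := by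
    have h1 : (((X + 1 : Polynomial (ZMod p))) ^ N).degree = (N : WithBot ℕ) := by
      rw [degree_eq_natDegree hmonA.ne_zero, hdegA]
    have h2 : ((X ^ N + 1 : Polynomial (ZMod p))).degree = (N : WithBot ℕ) := by
      rw [degree_eq_natDegree hmonB.ne_zero, hdegB]
    have := degree_sub_lt (h1.trans h2.symm) hmonA.ne_zero
      (by rw [hmonA.leadingCoeff, hmonB.leadingCoeff])
    rwa [h1] at this
  have hgnd : gP.natDegree ≤ N - 1 := by
    have := (natDegree_lt_iff_degree_lt hgP0).mpr hdlt
    omega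
  -- the polynomial over the field K = AdjoinRoot fb
  set G : Polynomial (AdjoinRoot fb) :=
    gP.map (algebraMap (ZMod p) (AdjoinRoot fb)) with hGdef
  have hG0 : G ≠ 0 := by
    rw [hGdef, Ne, Polynomial.map_eq_zero_iff
      (algebraMap (ZMod p) (AdjoinRoot fb)).injective]
    exact hgP0
  have hGnd : G.natDegree ≤ N - 1 := le_trans natDegree_map_le hgnd
  -- the solution set mod p
  set B : Set (Polynomial (ZMod p)) := {h : Polynomial (ZMod p) |
      h.degree < (D : WithBot ℕ) ∧ fb ∣ ((h + 1) ^ N - (h ^ N + 1))} with hBdef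
  have hmaps : ∀ h ∈ B, ρ h ∈ (G.roots.toFinset : Set (AdjoinRoot fb)) := by
    intro h hh
    have h0 : ρ ((h + 1) ^ N - (h ^ N + 1)) = 0 := AdjoinRoot.mk_eq_zero.mpr hh.2
    have h0' : (ρ h + 1) ^ N - ((ρ h) ^ N + 1) = 0 := by
      simpa [map_sub, map_add, map_pow, map_one] using h0
    have hroot : G.IsRoot (ρ h) := by
      have haev : (Polynomial.aeval (ρ h)) gP = 0 := by
        rw [hgPdef]
        simp only [map_sub, map_add, map_pow, aeval_X, map_one]
        exact h0'
      rw [IsRoot.def, hGdef, eval_map, ← aeval_def]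
      exact haev
    simp only [Finset.mem_coe, Multiset.mem_toFinset]
    exact (mem_roots hG0).mpr hroot
  have hinj : Set.InjOn ρ B := by
    intro h₁ h1m h₂ h2m he
    have hdvd : fb ∣ h₁ - h₂ := (AdjoinRoot.mk_eq_mk).mp he
    have hdegs : (h₁ - h₂).degree < fb.degree := by
      rw [hfbdeg]
      exact lt_of_le_of_lt (degree_sub_le _ _) (max_lt h1m.1 h2m.1)
    have := Polynomial.eq_zero_of_dvd_of_degree_lt hdvd hdegs
    exact sub_eq_zero.mp this
  have hBcard : B.ncard ≤ N - 1 := by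
    have h1 := Set.ncard_le_ncard_of_injOn ρ hmaps hinj (G.roots.toFinset.finite_toSet)
    rw [Set.ncard_coe_finset] at h1
    exact h1.trans ((Multiset.toFinset_card_le _).trans
      ((Polynomial.card_roots' G).trans hGnd))
  have hBfin : B.Finite := Set.Finite.of_finite_image
    ((G.roots.toFinset.finite_toSet).subset (Set.image_subset_iff.mpr hmaps)) hinj
  haveI : Finite ↥B := hBfin
  -- the kernel of φ as an additive subgroup, of cardinality q
  set φ' : ZMod N →+ ZMod p := φ.toAddMonoidHom with hφ'def
  have hsurj : Function.Surjective φ' := by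
    intro y
    refine ⟨((y.val : ℕ) : ZMod N), ?_⟩
    show φ ((y.val : ℕ) : ZMod N) = y
    rw [map_natCast]
    exact ZMod.natCast_rightInverse y
  set H : AddSubgroup (ZMod N) := φ'.ker with hHdef
  have hHcard : Nat.card H = q := by
    have h1 : Nat.card (ZMod N) = Nat.card (ZMod N ⧸ H) * Nat.card H :=
      AddSubgroup.card_eq_card_quotient_mul_card_addSubgroup H
    have h2 : Nat.card (ZMod N ⧸ H) = p :=
      (Nat.card_congr
        (QuotientAddGroup.quotientKerEquivOfSurjective φ' hsurj).toEquiv).trans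
        (Nat.card_zmod p)
    have h1' : N = p * Nat.card H :=
      (Nat.card_zmod N).symm.trans
        (h1.trans (congrArg (· * Nat.card ↥H) h2))
    exact Nat.eq_of_mul_eq_mul_left hp.pos (by rw [hpq, ← h1'])
  -- the map from A to B
  have hF : ∀ h ∈ A, (h.map φ) ∈ B := by
    intro h hh
    refine ⟨lt_of_le_of_lt degree_map_le hh.1, ?_⟩
    obtain ⟨c, hc⟩ := hh.2
    refine ⟨c.map φ, ?_⟩
    have := congrArg (Polynomial.map φ) hc
    simpa [Polynomial.map_sub, Polynomial.map_add, Polynomial.map_pow,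
      Polynomial.map_one, Polynomial.map_mul] using this
  have hker : ∀ (h : Polynomial (ZMod N)) (i : ℕ),
      (h.coeff i - ((((h.map φ).coeff i).val : ℕ) : ZMod N)) ∈ H := by
    intro h i
    have hz : φ (h.coeff i - ((((h.map φ).coeff i).val : ℕ) : ZMod N)) = 0 := by
      simp [map_sub, map_natCast, ZMod.natCast_val, ZMod.cast_id, Polynomial.coeff_map]
    exact AddMonoidHom.mem_ker.mpr hz
  let F : A → (↥B × (Fin D → ↥H)) := fun h =>
    (⟨(h : Polynomial (ZMod N)).map φ, hF _ h.2⟩,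
     fun i => ⟨(h : Polynomial (ZMod N)).coeff i
        - (((((h : Polynomial (ZMod N)).map φ).coeff i).val : ℕ) : ZMod N), hker _ _⟩)
  have hFinj : Function.Injective F := by
    rintro ⟨h₁, hm₁⟩ ⟨h₂, hm₂⟩ he
    simp only [F, Prod.mk.injEq, Subtype.mk.injEq, funext_iff] at he
    obtain ⟨he1, he2⟩ := he
    refine Subtype.ext ?_
    apply Polynomial.ext
    intro n
    by_cases hn : n < D
    · have h3 := he2 ⟨n, hn⟩
      rw [he1] at h3
      exact sub_left_inj.mp h3
    · have hDn : (D : WithBot ℕ) ≤ (n : WithBot ℕ) := by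
        exact_mod_cast Nat.cast_le.mpr (le_of_not_gt hn)
      rw [coeff_eq_zero_of_degree_lt (lt_of_lt_of_le hm₁.1 hDn),
        coeff_eq_zero_of_degree_lt (lt_of_lt_of_le hm₂.1 hDn)]
  have hAcard : A.ncard ≤ B.ncard * q ^ D := by
    have h1 := Nat.card_le_card_of_injective F hFinj
    rw [Nat.card_coe_set_eq, Nat.card_prod, Nat.card_fun,
      Nat.card_coe_set_eq, hHcard, Nat.card_eq_fintype_card, Fintype.card_fin] at h1
    exact h1
  -- final arithmetic
  have hNDpos : 0 < N ^ D := pow_pos (by omega) D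
  calc A.ncard * p ^ D ≤ (B.ncard * q ^ D) * p ^ D := Nat.mul_le_mul_right _ hAcard
    _ ≤ ((N - 1) * q ^ D) * p ^ D :=
        Nat.mul_le_mul_right _ (Nat.mul_le_mul_right _ hBcard)
    _ = (N - 1) * (q * p) ^ D := by rw [mul_pow]; ring
    _ = (N - 1) * N ^ D := by rw [mul_comm q p, hpq]
    _ < N ^ (D + 1) := by
        rw [pow_succ]
        have : (N - 1) * N ^ D < N * N ^ D :=
          (Nat.mul_lt_mul_right hNDpos).mpr (by omega)
        calc (N - 1) * N ^ D < N * N ^ D := this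
          _ = N ^ D * N := mul_comm _ _
end

section
/- Let N be a composite integer with prime factorization N = p_1^{e_1} ⋯ p_r^{e_r}, where the p_i are r ≥ 2 distinct primes and e_i ≥ 1. Let f ∈ (ℤ/Nℤ)[x] be a monic polynomial of degree D ≥ 1 whose reduction modulo p_i is irreducible in (ℤ/p_iℤ)[x] for every i = 1, …, r. Then the number M of polynomials h ∈ (ℤ/Nℤ)[x] with deg h < D such that (h(x) + 1)^N ≡ h(x)^N + 1 (mod f(x)) in (ℤ/Nℤ)[x] satisfies M · (p_1 ⋯ p_r)^D < N^{D + r}; equivalently, a uniformly random such h satisfies the congruence with probability less than N^r / (p_1 ⋯ p_r)^D. -/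
open Polynomial

lemma abQ_card {K : Type*} [Field K] [DecidableEq K] (pp : ℕ) [Fact pp.Prime] [CharP K pp]
    (a m N : ℕ) (hm2 : 2 ≤ m) (hpm : ¬ pp ∣ m) (hN : N = pp ^ a * m) :
    ((X+1)^N - (X^N+1) : K[X]) ≠ 0 ∧
      (((X+1)^N - (X^N+1) : K[X]).roots.toFinset.card ≤ N - 1) := by
  have hppos : 0 < pp := (Fact.out : pp.Prime).pos
  have hN2 : 2 ≤ N := by
    have : 1 ≤ pp ^ a := Nat.one_le_pow _ _ hppos
    calc 2 ≤ m := hm2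
    _ = 1 * m := (one_mul m).symm
    _ ≤ pp ^ a * m := Nat.mul_le_mul_right m this
    _ = N := hN.symm
  set P : K[X] := (X+1)^m - (X^m+1) with hP
  have hPco : P.coeff 1 = (m : K) := by
    have h1 : ((X+1 : K[X])^m).coeff 1 = (m.choose 1 : K) := coeff_X_add_one_pow K m 1
    have h2 : ((X^m + 1 : K[X])).coeff 1 = 0 := by
      rw [coeff_add, coeff_X_pow, coeff_one]
      simp only [if_neg (by omega : ¬ (1:ℕ) = m), if_neg (by omega : ¬ (1:ℕ) = 0), add_zero]
    rw [hP, coeff_sub, h1, h2, Nat.choose_one_right, sub_zero]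
  have hPne : P ≠ 0 := by
    intro h
    have : P.coeff 1 = 0 := by rw [h]; simp
    rw [hPco] at this
    exact hpm ((CharP.cast_eq_zero_iff K pp m).mp this)
  have hcomp : ((X+1)^N - (X^N+1) : K[X]) = P.comp (X ^ (pp ^ a)) := by
    rw [hP]
    simp only [sub_comp, add_comp, pow_comp, X_comp, one_comp, one_pow]
    rw [hN, pow_mul, pow_mul, add_pow_char_pow, one_pow]
  have hQne : ((X+1)^N - (X^N+1) : K[X]) ≠ 0 := by
    rw [hcomp]
    intro h
    rcases comp_eq_zero_iff.mp h with h' | ⟨_, h'⟩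
    · exact hPne h'
    · have h2 := congrArg natDegree h'
      rw [natDegree_X_pow, natDegree_C] at h2
      exact Nat.pos_iff_ne_zero.mp (pow_pos hppos a) h2
  refine ⟨hQne, ?_⟩
  have hm1 : ((X+1 : K[X])^N).Monic := by
    have h : (X+1 : K[X]) = X + C 1 := by simp
    rw [h]; exact (monic_X_add_C 1).pow N
  have hm2' : ((X^N + 1) : K[X]).Monic := by
    have h : (X^N + 1 : K[X]) = X^N + C 1 := by simp
    rw [h]; exact monic_X_pow_add_C 1 (by omega)
  have hd1 : ((X+1 : K[X])^N).degree = (N : WithBot ℕ) := by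
    rw [degree_eq_natDegree hm1.ne_zero]
    have h : (X+1 : K[X]) = X + C 1 := by simp
    rw [h, natDegree_pow_X_add_C]
  have hd2 : ((X^N + 1) : K[X]).degree = (N : WithBot ℕ) := by
    have h : (X^N + 1 : K[X]) = X^N + C 1 := by simp
    rw [h]; exact degree_X_pow_add_C (by omega) 1
  have hdeg : (((X+1)^N - (X^N+1)) : K[X]).degree < (N : WithBot ℕ) := by
    rw [← hd1]
    exact degree_sub_lt (hd1.trans hd2.symm) hm1.ne_zero (hm1.leadingCoeff.trans hm2'.leadingCoeff.symm)
  have hnd : (((X+1)^N - (X^N+1)) : K[X]).natDegree < N :=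
    (natDegree_lt_iff_degree_lt hQne).mpr hdeg
  calc (((X+1)^N - (X^N+1)) : K[X]).roots.toFinset.card
      ≤ Multiset.card (((X+1)^N - (X^N+1)) : K[X]).roots := Multiset.toFinset_card_le _
    _ ≤ (((X+1)^N - (X^N+1)) : K[X]).natDegree := card_roots' _
    _ ≤ N - 1 := by omega

lemma ker_card_le (pp ee : ℕ) (hpp : pp.Prime) (hee : 1 ≤ ee) :
    Nat.card {x : ZMod (pp ^ ee) // pp ∣ x.val} ≤ pp ^ (ee - 1) := by
  haveI : NeZero (pp ^ ee) := ⟨(pow_pos hpp.pos ee).ne'⟩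
  have key : ∀ x : {x : ZMod (pp ^ ee) // pp ∣ x.val}, x.1.val / pp < pp ^ (ee - 1) := by
    intro x
    have hv : x.1.val < pp ^ ee := ZMod.val_lt x.1
    have : pp ^ ee = pp ^ (ee - 1) * pp := by
      rw [← pow_succ]; congr 1; omega
    rw [Nat.div_lt_iff_lt_mul hpp.pos, ← this]; exact hv
  have hinj : Function.Injective
      (fun x : {x : ZMod (pp ^ ee) // pp ∣ x.val} => (⟨x.1.val / pp, key x⟩ : Fin (pp ^ (ee - 1)))) := by
    intro x y hxy
    have h1 : x.1.val / pp = y.1.val / pp := by simpa using congrArg Fin.val hxy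
    have h2 : x.1.val = y.1.val := by
      rw [← Nat.div_mul_cancel x.2, ← Nat.div_mul_cancel y.2, h1]
    exact Subtype.ext (ZMod.val_injective _ h2)
  calc Nat.card {x : ZMod (pp ^ ee) // pp ∣ x.val}
      ≤ Nat.card (Fin (pp ^ (ee - 1))) := Nat.card_le_card_of_injective _ hinj
    _ = pp ^ (ee - 1) := by simp

lemma crt_inj (r : ℕ) (a : Fin r → ℕ) (copr : Pairwise (Function.onFun Nat.Coprime a)) (N : ℕ)
    (hN : N = ∏ i, a i) (hd : ∀ i, a i ∣ N) :
    Function.Injective (fun (x : ZMod N) (i : Fin r) => ZMod.castHom (hd i) (ZMod (a i)) x) := by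
  subst hN
  have h1 : (Pi.ringHom fun i => ZMod.castHom (hd i) (ZMod (a i))) =
      (ZMod.prodEquivPi a copr : ZMod (∏ i, a i) →+* ∀ i, ZMod (a i)) := RingHom.ext_zmod _ _
  intro x y hxy
  apply (ZMod.prodEquivPi a copr).injective
  have hx : (Pi.ringHom fun i => ZMod.castHom (hd i) (ZMod (a i))) x =
      (Pi.ringHom fun i => ZMod.castHom (hd i) (ZMod (a i))) y := hxy
  rw [h1] at hx
  exact hx
lemma AB_per_prime (N pp ee m D : ℕ) (hpp : pp.Prime) (hee : 1 ≤ ee)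
    (hN : N = pp ^ ee * m) (hm2 : 2 ≤ m) (hpm : ¬ pp ∣ m) (hD : 1 ≤ D)
    (hqN : pp ^ ee ∣ N) (hpN : pp ∣ N)
    (f : Polynomial (ZMod N)) (hmonic : f.Monic) (hdeg : f.natDegree = D)
    (hirr : Irreducible (f.map (ZMod.castHom hpN (ZMod pp))))
    (T : Set (Polynomial (ZMod (pp ^ ee))))
    (hT : T = {g | g.degree < (D : WithBot ℕ) ∧
        (f.map (ZMod.castHom hqN (ZMod (pp ^ ee)))) ∣ ((g+1)^N - (g^N+1))}) :
    T.Finite ∧ Nat.card T ≤ (N - 1) * pp ^ ((ee - 1) * D) := by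
  classical
  subst hT
  haveI : Fact pp.Prime := ⟨hpp⟩
  haveI : NeZero (pp ^ ee) := ⟨(pow_pos hpp.pos ee).ne'⟩
  set fp : Polynomial (ZMod pp) := f.map (ZMod.castHom hpN (ZMod pp)) with hfp
  haveI : Fact (Irreducible fp) := ⟨hirr⟩
  haveI : CharP (AdjoinRoot fp) pp :=
    charP_of_injective_algebraMap (algebraMap (ZMod pp) (AdjoinRoot fp)).injective pp
  set Q : (AdjoinRoot fp)[X] := (X+1)^N - (X^N+1) with hQ
  obtain ⟨hQne, hQcard⟩ := abQ_card (K := AdjoinRoot fp) pp ee m N hm2 hpm hN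
  set π : ZMod (pp ^ ee) →+* ZMod pp :=
    ZMod.castHom (dvd_pow_self pp (by omega : ee ≠ 0)) (ZMod pp) with hπ
  set fq : Polynomial (ZMod (pp ^ ee)) := f.map (ZMod.castHom hqN (ZMod (pp ^ ee))) with hfq
  have hfpq : fq.map π = fp := by
    rw [hfq, hfp, Polynomial.map_map]
    congr 1
    exact RingHom.ext_zmod _ _
  set T : Set (Polynomial (ZMod (pp ^ ee))) :=
    {g | g.degree < (D : WithBot ℕ) ∧ fq ∣ ((g+1)^N - (g^N+1))} with hT
  -- root membership
  have hroot : ∀ g : T, (AdjoinRoot.mk fp ((g : Polynomial (ZMod (pp ^ ee))).map π)) ∈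
      Q.roots.toFinset := by
    rintro ⟨g, hgdeg, hgdvd⟩
    obtain ⟨c, hc⟩ := hgdvd
    have hmapped := congrArg (Polynomial.map π) hc
    rw [Polynomial.map_mul, Polynomial.map_sub, Polynomial.map_add, Polynomial.map_pow,
      Polynomial.map_add, Polynomial.map_pow, Polynomial.map_one, hfpq] at hmapped
    have hdvd2 : fp ∣ ((g.map π) + 1)^N - ((g.map π)^N + 1) := ⟨c.map π, hmapped⟩
    have hmk : (AdjoinRoot.mk fp) (((g.map π) + 1)^N - ((g.map π)^N + 1)) = 0 :=
      AdjoinRoot.mk_eq_zero.mpr hdvd2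
    rw [map_sub, map_pow, map_add, map_one, map_add, map_pow, map_one] at hmk
    refine Multiset.mem_toFinset.mpr (Polynomial.mem_roots'.mpr ⟨hQne, ?_⟩)
    show Q.eval _ = 0
    rw [hQ]
    simp only [eval_sub, eval_pow, eval_add, eval_X, eval_one]
    exact hmk
  -- kernel membership
  have hker : ∀ (c : ZMod (pp ^ ee)), pp ∣ (c - (((π c).val : ℕ) : ZMod (pp ^ ee))).val := by
    intro c
    have hπd : π (c - (((π c).val : ℕ) : ZMod (pp ^ ee))) = 0 := by
      rw [map_sub, map_natCast]
      simp [ZMod.natCast_val, ZMod.cast_id]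
    have : (((c - (((π c).val : ℕ) : ZMod (pp ^ ee))).val : ℕ) : ZMod pp) = 0 := by
      rw [ZMod.natCast_val, ← ZMod.castHom_apply (h := dvd_pow_self pp (by omega : ee ≠ 0))]
      exact hπd
    exact (ZMod.natCast_eq_zero_iff _ pp).mp this
  set Φ : T → ({x : AdjoinRoot fp // x ∈ Q.roots.toFinset} ×
      (Fin D → {x : ZMod (pp ^ ee) // pp ∣ x.val})) :=
    fun g => (⟨AdjoinRoot.mk fp ((g : Polynomial (ZMod (pp ^ ee))).map π), hroot g⟩,
      fun j => ⟨(g : Polynomial (ZMod (pp ^ ee))).coeff j -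
        (((π ((g : Polynomial (ZMod (pp ^ ee))).coeff j)).val : ℕ) : ZMod (pp ^ ee)),
        hker _⟩) with hΦ
  have hΦinj : Function.Injective Φ := by
    rintro ⟨g₁, hg₁⟩ ⟨g₂, hg₂⟩ h
    obtain ⟨h1, h2⟩ := Prod.ext_iff.mp h
    -- from the first component: reductions mod pp agree
    have hfpmonic : fp.Monic := hmonic.map _
    have hfpdeg : fp.degree = (D : WithBot ℕ) := by
      rw [degree_eq_natDegree hfpmonic.ne_zero, hmonic.natDegree_map, hdeg]
    have hmkeq : AdjoinRoot.mk fp (g₁.map π) = AdjoinRoot.mk fp (g₂.map π) := by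
      have := congrArg Subtype.val h1
      exact this
    have hsub : g₁.map π - g₂.map π = 0 := by
      refine Polynomial.eq_zero_of_dvd_of_degree_lt (AdjoinRoot.mk_eq_mk.mp hmkeq) ?_
      rw [hfpdeg]
      refine lt_of_le_of_lt (degree_sub_le _ _) (max_lt ?_ ?_)
      · exact lt_of_le_of_lt (degree_map_le) hg₁.1
      · exact lt_of_le_of_lt (degree_map_le) hg₂.1
    have hmapeq : g₁.map π = g₂.map π := sub_eq_zero.mp hsub
    have hπc : ∀ j : ℕ, π (g₁.coeff j) = π (g₂.coeff j) := by
      intro j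
      rw [← coeff_map, ← coeff_map, hmapeq]
    have hcoeff : ∀ j : ℕ, g₁.coeff j = g₂.coeff j := by
      intro j
      by_cases hj : j < D
      · have := congrArg Subtype.val (congrFun h2 ⟨j, hj⟩)
        have h3 : g₁.coeff j - (((π (g₁.coeff j)).val : ℕ) : ZMod (pp ^ ee)) =
            g₂.coeff j - (((π (g₂.coeff j)).val : ℕ) : ZMod (pp ^ ee)) := this
        rw [hπc j] at h3
        exact sub_left_injective h3
      · rw [Polynomial.coeff_eq_zero_of_degree_lt, Polynomial.coeff_eq_zero_of_degree_lt]
        · exact lt_of_lt_of_le hg₂.1 (Nat.cast_le.mpr (by omega))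
        · exact lt_of_lt_of_le hg₁.1 (Nat.cast_le.mpr (by omega))
    exact Subtype.ext (Polynomial.ext hcoeff)
  haveI hfinT : Finite T := Finite.of_injective Φ hΦinj
  refine ⟨Set.finite_coe_iff.mp hfinT, ?_⟩
  calc Nat.card T ≤ Nat.card ({x : AdjoinRoot fp // x ∈ Q.roots.toFinset} ×
      (Fin D → {x : ZMod (pp ^ ee) // pp ∣ x.val})) := Nat.card_le_card_of_injective Φ hΦinj
    _ = Q.roots.toFinset.card * (Nat.card {x : ZMod (pp ^ ee) // pp ∣ x.val}) ^ D := by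
        rw [Nat.card_prod, Nat.card_pi]
        congr 1
        · exact Nat.card_eq_finsetCard _
        · rw [Finset.prod_const, Finset.card_univ, Fintype.card_fin]
    _ ≤ (N - 1) * (pp ^ (ee - 1)) ^ D := by
        exact Nat.mul_le_mul hQcard (Nat.pow_le_pow_left (ker_card_le pp ee hpp hee) D)
    _ = (N - 1) * pp ^ ((ee - 1) * D) := by rw [← pow_mul]
/-- Let `N = ∏ i, p i ^ e i` be composite with `r ≥ 2` distinct prime factors, and let
`f ∈ (ℤ/Nℤ)[x]` be monic of degree `D ≥ 1` whose reduction modulo each `p i` is irreducible.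
Then the number `M` of polynomials `h` with `deg h < D` satisfying
`(h+1)^N ≡ h^N + 1 (mod f)` satisfies `M * (∏ i, p i)^D < N^(D + r)`. -/
theorem stmt_5 (N r : ℕ) (hr : 2 ≤ r) (p e : Fin r → ℕ) (hp : ∀ i, (p i).Prime)
    (hinj : Function.Injective p) (he : ∀ i, 1 ≤ e i) (hNfact : N = ∏ i, p i ^ e i)
    (hdvd : ∀ i, p i ∣ N)
    (D : ℕ) (hD : 1 ≤ D) (f : Polynomial (ZMod N)) (hmonic : f.Monic)
    (hdeg : f.natDegree = D)
    (hirr : ∀ i, Irreducible (f.map (ZMod.castHom (hdvd i) (ZMod (p i))))) :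
    {h : Polynomial (ZMod N) |
      h.degree < (D : WithBot ℕ) ∧ f ∣ ((h + 1) ^ N - (h ^ N + 1))}.ncard * (∏ i, p i) ^ D
      < N ^ (D + r) := by
  classical
  have hNpos : 0 < N := by
    rw [hNfact]; exact Finset.prod_pos fun i _ => pow_pos (hp i).pos _
  haveI : NeZero N := ⟨hNpos.ne'⟩
  have hqdvd : ∀ i, p i ^ e i ∣ N := fun i =>
    hNfact ▸ Finset.dvd_prod_of_mem _ (Finset.mem_univ i)
  set m : Fin r → ℕ := fun i => ∏ j ∈ Finset.univ.erase i, p j ^ e j with hm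
  have hNi : ∀ i, N = p i ^ e i * m i := fun i => by
    rw [hNfact, hm]; exact (Finset.mul_prod_erase _ _ (Finset.mem_univ i)).symm
  have hpm : ∀ i, ¬ p i ∣ m i := by
    intro i hdvdm
    obtain ⟨j, hj, hdj⟩ := ((hp i).prime.dvd_finset_prod_iff _).mp hdvdm
    have : p i = p j := ((Nat.prime_dvd_prime_iff_eq (hp i) (hp j)).mp
      ((hp i).dvd_of_dvd_pow hdj))
    exact (Finset.mem_erase.mp hj).1 (hinj this.symm)
  have hm2 : ∀ i, 2 ≤ m i := by
    intro i
    haveI : Nontrivial (Fin r) := Fin.nontrivial_iff_two_le.mpr hr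
    obtain ⟨j, hji⟩ := exists_ne i
    have hjmem : j ∈ Finset.univ.erase i := Finset.mem_erase.mpr ⟨hji, Finset.mem_univ j⟩
    have hdvdj : p j ^ e j ∣ m i := Finset.dvd_prod_of_mem _ hjmem
    have hmpos : 0 < m i := Finset.prod_pos fun k _ => pow_pos (hp k).pos _
    have h2 : 2 ≤ p j ^ e j :=
      le_trans (hp j).two_le (Nat.le_self_pow (by have := he j; omega) _)
    exact le_trans h2 (Nat.le_of_dvd hmpos hdvdj)
  have copr : Pairwise (Function.onFun Nat.Coprime fun i => p i ^ e i) := fun i j hij =>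
    Nat.Coprime.pow _ _ ((Nat.coprime_primes (hp i) (hp j)).mpr fun h => hij (hinj h))
  set T : (i : Fin r) → Set (Polynomial (ZMod (p i ^ e i))) := fun i =>
    {g : Polynomial (ZMod (p i ^ e i)) | g.degree < (D : WithBot ℕ) ∧
      (f.map (ZMod.castHom (hqdvd i) (ZMod (p i ^ e i)))) ∣ ((g+1)^N - (g^N+1))} with hTdef
  have H : ∀ i, (T i).Finite ∧ Nat.card (T i) ≤ (N - 1) * p i ^ ((e i - 1) * D) := fun i =>
    AB_per_prime N (p i) (e i) (m i) D (hp i) (he i) (hNi i) (hm2 i) (hpm i) hD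
      (hqdvd i) (hdvd i) f hmonic hdeg (hirr i) (T i) rfl
  set S : Set (Polynomial (ZMod N)) := {h | h.degree < (D : WithBot ℕ) ∧
    f ∣ ((h + 1) ^ N - (h ^ N + 1))} with hSdef
  have hmem : ∀ h : ↥S, ∀ i,
      (h.1.map (ZMod.castHom (hqdvd i) (ZMod (p i ^ e i)))) ∈ T i := by
    rintro ⟨h, hhdeg, hhdvd⟩ i
    refine ⟨lt_of_le_of_lt degree_map_le hhdeg, ?_⟩
    obtain ⟨c, hc⟩ := hhdvd
    refine ⟨c.map (ZMod.castHom (hqdvd i) (ZMod (p i ^ e i))), ?_⟩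
    have := congrArg (Polynomial.map (ZMod.castHom (hqdvd i) (ZMod (p i ^ e i)))) hc
    rwa [Polynomial.map_mul, Polynomial.map_sub, Polynomial.map_add, Polynomial.map_pow,
      Polynomial.map_add, Polynomial.map_pow, Polynomial.map_one] at this
  set Φ : ↥S → ∀ i, ↥(T i) := fun h i =>
    ⟨h.1.map (ZMod.castHom (hqdvd i) (ZMod (p i ^ e i))), hmem h i⟩ with hΦ
  have hΦinj : Function.Injective Φ := by
    rintro ⟨h₁, hh₁⟩ ⟨h₂, hh₂⟩ hEq
    have hmaps : ∀ i, h₁.map (ZMod.castHom (hqdvd i) (ZMod (p i ^ e i))) =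
        h₂.map (ZMod.castHom (hqdvd i) (ZMod (p i ^ e i))) := by
      intro i
      have := congrFun hEq i
      simpa [hΦ] using congrArg Subtype.val this
    refine Subtype.ext (Polynomial.ext fun j => ?_)
    apply crt_inj r (fun i => p i ^ e i) copr N hNfact hqdvd
    funext i
    show ZMod.castHom (hqdvd i) (ZMod (p i ^ e i)) (h₁.coeff j) =
      ZMod.castHom (hqdvd i) (ZMod (p i ^ e i)) (h₂.coeff j)
    rw [← coeff_map, ← coeff_map, hmaps i]
  haveI : ∀ i, Finite ↥(T i) := fun i => (H i).1.to_subtype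
  have step1 : S.ncard ≤ ∏ i, ((N - 1) * p i ^ ((e i - 1) * D)) := by
    rw [← Nat.card_coe_set_eq]
    calc Nat.card ↥S ≤ Nat.card (∀ i, ↥(T i)) := Nat.card_le_card_of_injective Φ hΦinj
      _ = ∏ i, Nat.card ↥(T i) := Nat.card_pi
      _ ≤ ∏ i, ((N - 1) * p i ^ ((e i - 1) * D)) :=
          Finset.prod_le_prod' fun i _ => (H i).2
  calc S.ncard * (∏ i, p i) ^ D
      ≤ (∏ i, ((N - 1) * p i ^ ((e i - 1) * D))) * (∏ i, p i) ^ D :=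
        Nat.mul_le_mul_right _ step1
    _ = (N - 1) ^ r * N ^ D := by
        rw [Finset.prod_mul_distrib, Finset.prod_const, Finset.card_univ, Fintype.card_fin,
          ← Finset.prod_pow, mul_assoc, ← Finset.prod_mul_distrib]
        congr 1
        rw [hNfact, ← Finset.prod_pow]
        apply Finset.prod_congr rfl
        intro i _
        rw [← pow_add, ← pow_mul]
        congr 1
        have h1 : e i - 1 + 1 = e i := by have := he i; omega
        calc (e i - 1) * D + D = ((e i - 1) + 1) * D := (Nat.succ_mul _ _).symm
          _ = e i * D := by rw [h1]
    _ < N ^ r * N ^ D :=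
        (Nat.mul_lt_mul_right (pow_pos hNpos D)).mpr
          (Nat.pow_lt_pow_left (by omega) (by omega))
    _ = N ^ (D + r) := by rw [← pow_add, Nat.add_comm]
end

section
/- Let N be an odd composite number with prime factorization N = p_1^{e_1} ⋯ p_r^{e_r}, where the p_i are distinct primes and e_i ≥ 1, and write N − 1 = 2^s · t with t odd. Let W be the number of units a ∈ (ℤ/Nℤ)^× such that a^t = 1 or a^{2^j t} = −1 for some integer j with 0 ≤ j ≤ s − 1 (the Miller–Rabin nonwitnesses for N). Then 2^{r−1} · (∏_{i=1}^r p_i^{e_i − 1}) · W ≤ N − 1; in particular, the Miller–Rabin test applied to N fails with probability at most 1 / (2^{r−1} · ∏_{i=1}^r p_i^{e_i − 1}). -/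
open Finset

lemma MRaux_prod_dvd {ι : Type*} [Fintype ι] {f : ι → ℕ} (hco : Pairwise (Function.onFun Nat.Coprime f))
    {v : ℕ} (h : ∀ i, f i ∣ v) : (∏ i, f i) ∣ v := by
  have hz : (∏ i, (f i : ℤ)) ∣ (v : ℤ) :=
    Fintype.prod_dvd_of_coprime
      (fun i j hij => Nat.isCoprime_iff_coprime.mpr (hco hij))
      (fun i => Int.natCast_dvd_natCast.mpr (h i))
  rw [← Nat.cast_prod] at hz
  exact_mod_cast hz

lemma MRaux_totient_prod {ι : Type*} (s : Finset ι) (f : ι → ℕ)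
    (h : (s : Set ι).Pairwise (Function.onFun Nat.Coprime f)) :
    Nat.totient (∏ i ∈ s, f i) = ∏ i ∈ s, Nat.totient (f i) := by
  classical
  induction' s using Finset.induction_on with a s has ih
  · simp
  · haveI : Std.Symm (Function.onFun Nat.Coprime f) := ⟨fun x y hxy => Nat.Coprime.symm hxy⟩
    rw [Finset.coe_insert,
      Set.pairwise_insert_of_symm] at h
    rw [Finset.prod_insert has, Finset.prod_insert has,
      Nat.totient_mul (Nat.Coprime.prod_right fun i hi => h.2 i hi (fun he => has (he ▸ hi))),
      ih h.1]

lemma MRaux_cyclic_count {G : Type*} [Group G] [Fintype G] [IsCyclic G] {m : ℕ} (hm : 0 < m) :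
    {x : G | x ^ m = 1}.ncard ≤ Nat.gcd m (Fintype.card G) := by
  classical
  set g := Nat.gcd m (Fintype.card G) with hg
  have hg0 : 0 < g := Nat.gcd_pos_of_pos_left _ hm
  have hsub : {x : G | x ^ m = 1} ⊆ {x : G | x ^ g = 1} := by
    intro x hx
    have h1 : orderOf x ∣ m := orderOf_dvd_of_pow_eq_one hx
    have h2 : orderOf x ∣ Fintype.card G := orderOf_dvd_card
    exact orderOf_dvd_iff_pow_eq_one.mp (Nat.dvd_gcd h1 h2)
  refine le_trans (Set.ncard_le_ncard hsub (Set.toFinite _)) ?_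
  have : {x : G | x ^ g = 1}.ncard = (Finset.univ.filter fun x : G => x ^ g = 1).card := by
    rw [Set.ncard_eq_toFinset_card']
    congr 1
    ext x
    simp
  rw [this]
  exact IsCyclic.card_pow_eq_one_le hg0

lemma MRaux_ker_trivial {p : ℕ} (hp : p.Prime) {E : ℕ} (hE : 1 ≤ E) {m : ℕ}
    (hm : Nat.Coprime p m) (c : (ZMod (p ^ E))ˣ) (hc : c ^ m = 1)
    (h1 : ZMod.unitsMap (dvd_pow_self p (Nat.one_le_iff_ne_zero.mp hE)) c = 1) : c = 1 := by
  haveI : Fact p.Prime := ⟨hp⟩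
  haveI : NeZero (p ^ E) := ⟨pow_ne_zero _ hp.pos.ne'⟩
  set π := ZMod.unitsMap (dvd_pow_self p (Nat.one_le_iff_ne_zero.mp hE)) with hπ
  have hsurj : Function.Surjective π := ZMod.unitsMap_surjective _
  have hcardq : Nat.card ((ZMod (p ^ E))ˣ ⧸ π.ker) = p - 1 := by
    rw [Nat.card_congr (QuotientGroup.quotientKerEquivOfSurjective π hsurj).toEquiv]
    rw [Nat.card_eq_fintype_card, ZMod.card_units_eq_totient, Nat.totient_prime hp]
  have hcardG : Nat.card (ZMod (p ^ E))ˣ = p ^ (E - 1) * (p - 1) := by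
    rw [Nat.card_eq_fintype_card, ZMod.card_units_eq_totient, Nat.totient_prime_pow hp hE]
  have hker : Nat.card π.ker = p ^ (E - 1) := by
    have := Subgroup.card_eq_card_quotient_mul_card_subgroup π.ker
    rw [hcardq, hcardG] at this
    have hp1 : 0 < p - 1 := by have := hp.two_le; omega
    exact Nat.eq_of_mul_eq_mul_left hp1 (this.symm.trans (mul_comm _ _))
  have hmem : c ∈ π.ker := by rw [MonoidHom.mem_ker]; exact h1
  have hdvd1 : orderOf c ∣ p ^ (E - 1) := by
    have := orderOf_dvd_natCard (⟨c, hmem⟩ : π.ker)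
    rwa [Subgroup.orderOf_mk, hker] at this
  have hdvd2 : orderOf c ∣ m := orderOf_dvd_of_pow_eq_one hc
  have hco : Nat.Coprime (p ^ (E - 1)) m := (Nat.Coprime.pow_left _ hm)
  have : orderOf c ∣ 1 := by
    have := Nat.dvd_gcd hdvd1 hdvd2
    rwa [Nat.Coprime.gcd_eq_one hco] at this
  rw [Nat.dvd_one] at this
  exact orderOf_eq_one_iff.mp this

lemma MRaux_two_pow_dvd {p : ℕ} (hp : p.Prime) (hp2 : p ≠ 2) {E : ℕ} (hE : 1 ≤ E)
    {k t : ℕ} (b : (ZMod (p ^ E))ˣ) (hb : b ^ (2 ^ k * t) = -1) :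
    2 ^ (k + 1) ∣ p - 1 := by
  haveI : Fact p.Prime := ⟨hp⟩
  haveI : NeZero (p ^ E) := ⟨pow_ne_zero _ hp.pos.ne'⟩
  have hp3 : 3 ≤ p := by rcases hp.two_le.lt_or_eq with h | h; omega; omega
  haveI : Fact (2 < p ^ E) := ⟨by calc 2 < p := by omega
                                    _ = p ^ 1 := (pow_one p).symm
                                    _ ≤ p ^ E := Nat.pow_le_pow_right hp.pos hE⟩
  have hne : (-1 : (ZMod (p ^ E))ˣ) ≠ 1 := by
    intro h
    have := congrArg Units.val h
    rw [Units.val_neg, Units.val_one] at this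
    exact ZMod.neg_one_ne_one this
  set c := b ^ t with hcdef
  have hck : c ^ (2 ^ k) = -1 := by
    rw [hcdef, ← pow_mul, mul_comm t (2 ^ k), hb]
  have hck1 : c ^ (2 ^ (k + 1)) = 1 := by
    rw [pow_succ, pow_mul, hck]
    simp
  have hdvd : orderOf c ∣ 2 ^ (k + 1) := orderOf_dvd_of_pow_eq_one hck1
  obtain ⟨j, hj, horder⟩ := (Nat.dvd_prime_pow Nat.prime_two).mp hdvd
  have hjk : j = k + 1 := by
    by_contra hne'
    have hjle : j ≤ k := by omega
    have : c ^ (2 ^ k) = 1 := by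
      apply orderOf_dvd_iff_pow_eq_one.mp
      rw [horder]
      exact pow_dvd_pow 2 hjle
    rw [hck] at this
    exact hne this
  have horderc : orderOf c = 2 ^ (k + 1) := hjk ▸ horder
  have hcard : orderOf c ∣ p ^ (E - 1) * (p - 1) := by
    have := orderOf_dvd_card (x := c)
    rwa [ZMod.card_units_eq_totient, Nat.totient_prime_pow hp hE] at this
  rw [horderc] at hcard
  have hco : Nat.Coprime (2 ^ (k + 1)) (p ^ (E - 1)) := by
    apply Nat.Coprime.pow
    exact (Nat.coprime_primes Nat.prime_two hp).mpr (fun h => hp2 h.symm)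
  exact hco.dvd_of_dvd_mul_left hcard

/-- Let `N = ∏ i, p i ^ e i` be an odd composite number with distinct prime factors `p i`,
and write `N - 1 = 2^s * t` with `t` odd. The number `W` of Miller–Rabin nonwitnesses,
i.e. units `a` of `ℤ/Nℤ` with `a^t = 1` or `a^(2^j t) = -1` for some `0 ≤ j ≤ s - 1`,
satisfies `2^(r-1) * (∏ i, p i ^ (e i - 1)) * W ≤ N - 1`. -/
theorem stmt_6 (N : ℕ) (hodd : Odd N) (hN : 1 < N) (hcomp : ¬ N.Prime)
    (r : ℕ) (p e : Fin r → ℕ) (hp : ∀ i, (p i).Prime) (hinj : Function.Injective p)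
    (he : ∀ i, 1 ≤ e i) (hNfact : N = ∏ i, p i ^ e i)
    (s t : ℕ) (ht : Odd t) (hst : N - 1 = 2 ^ s * t) :
    2 ^ (r - 1) * (∏ i, p i ^ (e i - 1)) *
      {a : (ZMod N)ˣ | (a : ZMod N) ^ t = 1 ∨
        ∃ j < s, (a : ZMod N) ^ (2 ^ j * t) = -1}.ncard ≤ N - 1 := by
  classical
  haveI : NeZero N := ⟨by omega⟩
  haveI instFact : ∀ i, Fact (p i).Prime := fun i => ⟨hp i⟩
  haveI instNZ : ∀ i, NeZero (p i ^ e i) := fun i => ⟨pow_ne_zero _ (hp i).pos.ne'⟩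
  haveI instNZp : ∀ i, NeZero (p i) := fun i => ⟨(hp i).pos.ne'⟩
  -- basic facts
  have hr : 1 ≤ r := by
    rcases Nat.eq_zero_or_pos r with h | h
    · subst h; simp at hNfact; omega
    · exact h
  have hdvdN : ∀ i, p i ^ e i ∣ N := fun i => hNfact ▸ Finset.dvd_prod_of_mem _ (Finset.mem_univ i)
  have hppow : ∀ i, p i ∣ p i ^ e i := fun i => dvd_pow_self _ (Nat.one_le_iff_ne_zero.mp (he i))
  have hpdvdN : ∀ i, p i ∣ N := fun i => dvd_trans (hppow i) (hdvdN i)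
  have hpodd : ∀ i, p i ≠ 2 := by
    intro i hi2
    have : (2 : ℕ) ∣ N := hi2 ▸ hpdvdN i
    rw [Nat.odd_iff] at hodd
    omega
  have ht0 : 0 < t := ht.pos
  have hpt : ∀ i, ¬ (p i ∣ t) := by
    intro i hit
    have h1 : p i ∣ N - 1 := hst ▸ Dvd.dvd.mul_left hit _
    have h2 : p i ∣ N - (N - 1) := Nat.dvd_sub (hpdvdN i) h1
    have h3 : N - (N - 1) = 1 := by omega
    rw [h3, Nat.dvd_one] at h2
    exact (hp i).one_lt.ne' h2
  have hco : Pairwise (Function.onFun Nat.Coprime fun i => p i ^ e i) := fun i j hij =>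
    Nat.Coprime.pow _ _ ((Nat.coprime_primes (hp i) (hp j)).mpr (fun h' => hij (hinj h')))
  -- the exponent k
  set P : ℕ → Prop := fun j => ∃ a : (ZMod N)ˣ, a ^ (2 ^ j * t) = -1 with hPdef
  have hP0 : P 0 := ⟨-1, by rw [pow_zero, one_mul]; exact Odd.neg_one_pow ht⟩
  set k := Nat.findGreatest P (s - 1) with hkdef
  have hPk : P k := Nat.findGreatest_spec (Nat.zero_le _) hP0
  have hmax : ∀ j, j < s → P j → j ≤ k := fun j hj hPj =>
    Nat.le_findGreatest (by omega) hPj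
  set m := 2 ^ k * t with hmdef
  have hm0 : 0 < m := Nat.mul_pos (Nat.pow_pos (by norm_num)) ht0
  obtain ⟨a₀, ha₀⟩ := hPk
  -- coprimality of p i with m
  have hm_cop : ∀ i, Nat.Coprime (p i) m := by
    intro i
    rw [(hp i).coprime_iff_not_dvd]
    intro h
    rcases ((Nat.Prime.dvd_mul (hp i)).mp h) with h' | h'
    · have := (hp i).dvd_of_dvd_pow h'
      have := (Nat.prime_dvd_prime_iff_eq (hp i) Nat.prime_two).mp this
      exact hpodd i this
    · exact hpt i h'
  -- sets
  set S : Set (ZMod N)ˣ := {a : (ZMod N)ˣ | a ^ t = 1 ∨ ∃ j < s, a ^ (2 ^ j * t) = -1} with hSdef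
  set K : Set (ZMod N)ˣ := {a : (ZMod N)ˣ | a ^ m = 1} with hKdef
  set J : Set (ZMod N)ˣ := {a : (ZMod N)ˣ | a ^ m = 1 ∨ a ^ m = -1} with hJdef
  have hS_eq : {a : (ZMod N)ˣ | (a : ZMod N) ^ t = 1 ∨
      ∃ j < s, (a : ZMod N) ^ (2 ^ j * t) = -1} = S := by
    ext a
    simp only [hSdef, Set.mem_setOf_eq, Units.ext_iff, Units.val_pow_eq_pow_val,
      Units.val_one, Units.val_neg]
  have hSJ : S ⊆ J := by
    intro a ha
    rcases ha with h1 | ⟨j, hjs, hj⟩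
    · left
      rw [hmdef, mul_comm, pow_mul, h1, one_pow]
    · have hjk : j ≤ k := hmax j hjs ⟨a, hj⟩
      rcases eq_or_lt_of_le hjk with h | h
      · right; rw [hmdef, ← h]; exact hj
      · left
        have h2 : (2 : ℕ) ^ j * t * 2 ^ (k - j) = m := by
          rw [hmdef, mul_right_comm, ← pow_add]
          congr 2
          omega
        rw [← h2, pow_mul, hj]
        have : Even (2 ^ (k - j)) := by
          rw [Nat.even_pow]
          exact ⟨even_two, by omega⟩
        exact this.neg_one_pow
  have hJK : J ⊆ K ∪ (fun x => a₀ * x) '' K := by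
    intro a ha
    rcases ha with h1 | h1
    · exact Or.inl h1
    · right
      refine ⟨a₀⁻¹ * a, ?_, by group⟩
      show (a₀⁻¹ * a) ^ m = 1
      rw [mul_pow, inv_pow, ha₀, h1]
      simp
  -- the reduction maps
  set Φ : (i : Fin r) → (ZMod N)ˣ →* (ZMod (p i ^ e i))ˣ :=
    fun i => ZMod.unitsMap (hdvdN i) with hΦdef
  set Φp : (i : Fin r) → (ZMod N)ˣ →* (ZMod (p i))ˣ :=
    fun i => ZMod.unitsMap (dvd_trans (hppow i) (hdvdN i)) with hΦpdef
  have hcompose : ∀ i (a : (ZMod N)ˣ),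
      ZMod.unitsMap (dvd_pow_self (p i) (Nat.one_le_iff_ne_zero.mp (he i))) (Φ i a) = Φp i a := by
    intro i a
    rw [hΦdef, hΦpdef, ← MonoidHom.comp_apply, ZMod.unitsMap_comp]
  -- injectivity on units from CRT
  have hΦinj : ∀ a : (ZMod N)ˣ, (∀ i, Φ i a = 1) → a = 1 := by
    intro a h
    have hv : ∀ i, p i ^ e i ∣ ((a : ZMod N) - 1).val := by
      intro i
      have h1 : (ZMod.castHom (hdvdN i) (ZMod (p i ^ e i))) ((a : ZMod N) - 1) = 0 := by
        rw [map_sub, map_one]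
        have : (ZMod.castHom (hdvdN i) (ZMod (p i ^ e i))) (a : ZMod N)
            = ((Φ i a : (ZMod (p i ^ e i))ˣ) : ZMod (p i ^ e i)) := by
          rw [hΦdef]
          rfl
        rw [this, h i]
        simp
      rw [ZMod.castHom_apply, ← ZMod.natCast_val, ZMod.natCast_eq_zero_iff] at h1
      exact h1
    have hNdvd : N ∣ ((a : ZMod N) - 1).val := by
      have := MRaux_prod_dvd hco hv
      rwa [← hNfact] at this
    have hlt : ((a : ZMod N) - 1).val < N := ZMod.val_lt _
    have h0 : ((a : ZMod N) - 1).val = 0 := Nat.eq_zero_of_dvd_of_lt hNdvd hlt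
    have : (a : ZMod N) - 1 = 0 := (ZMod.val_eq_zero _).mp h0
    have : (a : ZMod N) = 1 := by linear_combination this
    exact Units.ext this
  -- injectivity of the product reduction map on K
  have hKinj : Set.InjOn (fun a : (ZMod N)ˣ => fun i => Φp i a) K := by
    intro a ha b hb hfab
    have hab1 : ∀ i, Φp i (a * b⁻¹) = 1 := by
      intro i
      have hfi : Φp i a = Φp i b := congrFun hfab i
      rw [map_mul, map_inv, hfi]
      group
    have hpow : (a * b⁻¹) ^ m = 1 := by
      have ha' : a ^ m = 1 := ha
      have hb' : b ^ m = 1 := hb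
      rw [mul_pow, inv_pow, ha', hb']
      simp
    have hone : ∀ i, Φ i (a * b⁻¹) = 1 := by
      intro i
      refine MRaux_ker_trivial (hp i) (he i) (hm_cop i) _ ?_ ?_
      · rw [← map_pow, hpow, map_one]
      · rw [hcompose]
        exact hab1 i
    have := hΦinj _ hone
    rwa [mul_inv_eq_one] at this
  -- counting K
  set Kbar : (i : Fin r) → Set (ZMod (p i))ˣ := fun i => {x : (ZMod (p i))ˣ | x ^ m = 1}
    with hKbardef
  set D : Fin r → ℕ := fun i => Nat.gcd m (p i - 1) with hDdef
  have hKbar_card : ∀ i, (Kbar i).ncard ≤ D i := by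
    intro i
    have := MRaux_cyclic_count (G := (ZMod (p i))ˣ) hm0
    rwa [ZMod.card_units_eq_totient, Nat.totient_prime (hp i)] at this
  have hKcard : K.ncard ≤ ∏ i, D i := by
    have hmaps : ∀ a ∈ K, (fun i => Φp i a) ∈ Set.univ.pi Kbar := by
      intro a ha i _
      show (Φp i a) ^ m = 1
      rw [← map_pow, show a ^ m = 1 from ha, map_one]
    have h1 : K.ncard ≤ (Set.univ.pi Kbar).ncard :=
      Set.ncard_le_ncard_of_injOn _ hmaps hKinj (Set.toFinite _)
    have h2 : (Set.univ.pi Kbar).ncard = ∏ i, (Kbar i).ncard := by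
      rw [← Nat.card_coe_set_eq, Nat.card_congr (Equiv.Set.univPi Kbar),
        Nat.card_pi]
      exact Finset.prod_congr rfl (fun i _ => Nat.card_coe_set_eq _)
    refine h1.trans (h2 ▸ Finset.prod_le_prod' (fun i _ => hKbar_card i))
  -- the count of S
  have hScard : S.ncard ≤ 2 * ∏ i, D i := by
    have h1 : S.ncard ≤ J.ncard := Set.ncard_le_ncard hSJ (Set.toFinite _)
    have h2 : J.ncard ≤ K.ncard + ((fun x => a₀ * x) '' K).ncard :=
      le_trans (Set.ncard_le_ncard hJK (Set.toFinite _)) (Set.ncard_union_le _ _)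
    have h3 : ((fun x => a₀ * x) '' K).ncard ≤ K.ncard := Set.ncard_image_le (Set.toFinite _)
    have h4 := hKcard
    omega
  -- divisibility `2 * D i ∣ p i - 1`
  have h2D : ∀ i, 2 * D i ∣ p i - 1 := by
    intro i
    have hbm : (Φ i a₀) ^ m = -1 := by
      rw [← map_pow, ha₀]
      apply Units.ext
      simp [hΦdef, ZMod.unitsMap_def]
    have h2k : 2 ^ (k + 1) ∣ p i - 1 := MRaux_two_pow_dvd (hp i) (hpodd i) (he i) _ hbm
    obtain ⟨c, hc⟩ := h2k
    have htc : Nat.Coprime 2 t := by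
      rw [Nat.odd_iff] at ht
      exact Nat.prime_two.coprime_iff_not_dvd.mpr (by omega)
    have hD : D i = 2 ^ k * Nat.gcd t c := by
      have h1 : (2 : ℕ) ^ (k + 1) * c = 2 ^ k * (2 * c) := by ring
      rw [hDdef]
      show Nat.gcd m (p i - 1) = _
      rw [hc, hmdef, h1, Nat.gcd_mul_left]
      congr 1
      exact Nat.Coprime.gcd_mul_left_cancel_right c htc
    rw [hD, hc]
    have h2 : 2 * (2 ^ k * Nat.gcd t c) = 2 ^ (k + 1) * Nat.gcd t c := by ring
    rw [h2]
    exact mul_dvd_mul_left _ (Nat.gcd_dvd_right t c)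
  -- final arithmetic
  have hφle : ∀ i, p i ^ (e i - 1) * (2 * D i) ≤ Nat.totient (p i ^ e i) := by
    intro i
    rw [Nat.totient_prime_pow (hp i) (he i)]
    have hp1 : 0 < p i - 1 := by have := (hp i).two_le; omega
    exact Nat.mul_le_mul le_rfl (Nat.le_of_dvd hp1 (h2D i))
  have h2r : (2 : ℕ) ^ (r - 1) * 2 = 2 ^ r := by
    rw [← pow_succ]
    congr 1
    omega
  have hsplit : ∏ i, (p i ^ (e i - 1) * (2 * D i))
      = (∏ i, p i ^ (e i - 1)) * (2 ^ r * ∏ i, D i) := by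
    rw [Finset.prod_mul_distrib, Finset.prod_mul_distrib, Finset.prod_const,
      Finset.card_univ, Fintype.card_fin]
  rw [hS_eq]
  calc 2 ^ (r - 1) * (∏ i, p i ^ (e i - 1)) * S.ncard
      ≤ 2 ^ (r - 1) * (∏ i, p i ^ (e i - 1)) * (2 * ∏ i, D i) :=
        Nat.mul_le_mul le_rfl hScard
    _ = (∏ i, p i ^ (e i - 1)) * (2 ^ r * ∏ i, D i) := by rw [← h2r]; ring
    _ = ∏ i, (p i ^ (e i - 1) * (2 * D i)) := hsplit.symm
    _ ≤ ∏ i, Nat.totient (p i ^ e i) := Finset.prod_le_prod' fun i _ => hφle i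
    _ = Nat.totient N := by rw [hNfact, MRaux_totient_prod _ _ (hco.set_pairwise _)]
    _ ≤ N - 1 := by have := Nat.totient_lt N hN; omega
end

section
/- Let N be an odd composite number with prime factorization N = p_1^{e_1} ⋯ p_r^{e_r}, where the p_i are r ≥ 2 distinct primes and e_i ≥ 1, and write N − 1 = 2^s t with t odd. Let f ∈ (ℤ/Nℤ)[x] be monic of degree D ≥ 1 whose reduction modulo p_i is irreducible for every i. Let W be the number of units a ∈ (ℤ/Nℤ)^× with a^t = 1 or a^{2^j t} = −1 for some 0 ≤ j ≤ s−1, and let B be the number of polynomials h ∈ (ℤ/Nℤ)[x] with deg h < D such that (h(x)+1)^N ≡ h(x)^N + 1 (mod f(x)). Then 2^{(r−1)D} · W^D · B < (N−1)^D · N^r. (Hence the combined algorithm that runs D independent Miller–Rabin tests and one modified Agrawal–Biswas test fails with probability less than 1 / (2^{(r−1) D} · N^{D − r}).) -/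
open Polynomial

lemma my_prod_add_one_le {ι : Type*} (s : Finset ι) (hs : s.Nonempty) (b : ι → ℕ) :
    (∏ i ∈ s, b i) + 1 ≤ ∏ i ∈ s, (b i + 1) := by
  induction hs using Finset.Nonempty.cons_induction with
  | singleton i => simp
  | cons i s his hs ih =>
    rw [Finset.prod_cons, Finset.prod_cons]
    calc (b i * ∏ j ∈ s, b j) + 1 ≤ (b i + 1) * ((∏ j ∈ s, b j) + 1) := by
          set P := ∏ j ∈ s, b j with hP
          have h : (b i + 1) * (P + 1) = b i * P + (b i + P + 1) := by ring
          rw [h]; linarith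
    _ ≤ (b i + 1) * ∏ j ∈ s, (b j + 1) := Nat.mul_le_mul_left _ ih

lemma my_prod_dvd {ι : Type*} (s : Finset ι) (f : ι → ℕ) (n : ℕ)
    (hcop : (s : Set ι).Pairwise fun i j => Nat.Coprime (f i) (f j))
    (hdvd : ∀ i ∈ s, f i ∣ n) : (∏ i ∈ s, f i) ∣ n := by
  classical
  induction s using Finset.induction with
  | empty => simpa using one_dvd n
  | @insert a s ha ih =>
    rw [Finset.prod_insert ha]
    have hcop' : (s : Set ι).Pairwise fun i j => Nat.Coprime (f i) (f j) :=
      hcop.mono (Finset.coe_subset.mpr (Finset.subset_insert a s))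
    have h1 : Nat.Coprime (f a) (∏ i ∈ s, f i) :=
      Nat.Coprime.prod_right fun i hi =>
        hcop (by simp) (by simp [hi]) (by rintro rfl; exact ha hi)
    exact Nat.Coprime.mul_dvd_of_dvd_of_dvd h1 (hdvd a (by simp))
      (ih hcop' fun i hi => hdvd i (by simp [hi]))

lemma my_units_pow_card_le {p : ℕ} [Fact p.Prime] (m : ℕ) (hm : 0 < m) (ε : (ZMod p)ˣ) :
    (Finset.univ.filter fun x : (ZMod p)ˣ => x ^ m = ε).card ≤ Nat.gcd m (p - 1) := by
  classical
  rcases (Finset.univ.filter fun x : (ZMod p)ˣ => x ^ m = ε).eq_empty_or_nonempty with hE | ⟨y, hy⟩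
  · simp [hE]
  · have hy' : y ^ m = ε := (Finset.mem_filter.mp hy).2
    set d := Nat.gcd m (p - 1) with hd
    have hdpos : 0 < d := Nat.gcd_pos_of_pos_left _ hm
    -- map x ↦ ((x * y⁻¹ : (ZMod p)ˣ) : ZMod p) into nthRoots d
    apply Finset.card_le_card_of_injOn
      (fun x => ((x * y⁻¹ : (ZMod p)ˣ) : ZMod p)) ?_ ?_ |>.trans
      ((Multiset.toFinset_card_le _).trans (Polynomial.card_nthRoots d (1 : ZMod p)))
    · intro x hx
      have hx' : x ^ m = ε := (Finset.mem_filter.mp hx).2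
      have h1 : (x * y⁻¹) ^ m = 1 := by
        rw [mul_pow, inv_pow, hx', hy', mul_inv_cancel]
      have h2 : (x * y⁻¹) ^ (p - 1) = 1 := by
        rw [← ZMod.card_units p]; exact pow_card_eq_one
      have hord : (x * y⁻¹) ^ d = 1 := by
        have := Nat.dvd_gcd (orderOf_dvd_of_pow_eq_one h1) (orderOf_dvd_of_pow_eq_one h2)
        exact orderOf_dvd_iff_pow_eq_one.mp this
      rw [Finset.mem_coe, Multiset.mem_toFinset, Polynomial.mem_nthRoots hdpos]
      rw [← Units.val_pow_eq_pow_val, hord, Units.val_one]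
    · intro a _ b _ hab
      have : (a * y⁻¹ : (ZMod p)ˣ) = b * y⁻¹ := Units.ext hab
      exact mul_right_cancel this

lemma my_core_inj {N : ℕ} (hN1 : 1 < N) {r : ℕ} {p e : Fin r → ℕ} (hp : ∀ i, (p i).Prime)
    (hinj : Function.Injective p) (he : ∀ i, 1 ≤ e i) (hNfact : N = ∏ i, p i ^ e i)
    (hdvd : ∀ i, p i ∣ N)
    (c : (ZMod N)ˣ) (hc1 : c ^ (N - 1) = 1)
    (hc2 : ∀ i, ZMod.unitsMap (hdvd i) c = 1) : c = 1 := by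
  classical
  haveI : NeZero N := ⟨by omega⟩
  have pe_dvd : ∀ i, p i ^ e i ∣ N := fun i =>
    hNfact ▸ Finset.dvd_prod_of_mem _ (Finset.mem_univ i)
  -- per component
  have key : ∀ i, ZMod.unitsMap (pe_dvd i) c = 1 := by
    intro i
    haveI : Fact (p i).Prime := ⟨hp i⟩
    have hppos : 1 < p i := (hp i).one_lt
    haveI : NeZero (p i ^ e i) := ⟨pow_ne_zero _ (by omega)⟩
    set u := ZMod.unitsMap (pe_dvd i) c with hu
    have hdvd_pe : p i ∣ p i ^ e i := dvd_pow_self _ (by have := he i; omega)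
    set g := ZMod.unitsMap hdvd_pe with hg
    -- u in kernel of g
    have hgu : g u = 1 := by
      have := congrFun (congrArg (fun f => f.comp (ZMod.unitsMap (pe_dvd i)))
        (rfl : g = g)) c
      have hcomp := ZMod.unitsMap_comp hdvd_pe (pe_dvd i)
      have : g u = ZMod.unitsMap (dvd_trans hdvd_pe (pe_dvd i)) c := by
        rw [hu, hg, ← MonoidHom.comp_apply, hcomp]
      rw [this]
      have : ZMod.unitsMap (dvd_trans hdvd_pe (pe_dvd i)) c
          = ZMod.unitsMap (hdvd i) c := by congr 1
      rw [this, hc2 i]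
    have hsurj : Function.Surjective g := ZMod.unitsMap_surjective hdvd_pe
    -- card of kernel = p^(e-1)
    have hcardG : Nat.card (ZMod (p i ^ e i))ˣ = p i ^ (e i - 1) * (p i - 1) := by
      rw [Nat.card_eq_fintype_card, ZMod.card_units_eq_totient,
        Nat.totient_prime_pow (hp i) (by have := he i; omega)]
    have hcardH : Nat.card (ZMod (p i))ˣ = p i - 1 := by
      rw [Nat.card_eq_fintype_card, ZMod.card_units]
    have hquot : Nat.card ((ZMod (p i ^ e i))ˣ ⧸ g.ker) = p i - 1 := by
      rw [Nat.card_congr (QuotientGroup.quotientKerEquivOfSurjective g hsurj).toEquiv, hcardH]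
    have hker : Nat.card g.ker = p i ^ (e i - 1) := by
      have hq := Subgroup.card_eq_card_quotient_mul_card_subgroup g.ker
      rw [hcardG, hquot] at hq
      have hp1 : 0 < p i - 1 := by have := (hp i).two_le; omega
      apply Nat.eq_of_mul_eq_mul_left hp1
      rw [← hq]; ring
    have humem : u ∈ g.ker := by rw [MonoidHom.mem_ker, hgu]
    have hord1 : orderOf u ∣ p i ^ (e i - 1) := by
      have := orderOf_dvd_natCard (⟨u, humem⟩ : g.ker)
      rwa [Subgroup.orderOf_mk, hker] at this
    have hord2 : orderOf u ∣ N - 1 := by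
      apply orderOf_dvd_of_pow_eq_one
      rw [hu, ← map_pow, hc1, map_one]
    have hpnd : ¬ p i ∣ N - 1 := by
      intro hdd
      have h1 := Nat.dvd_sub (hdvd i) hdd
      rw [(by omega : N - (N - 1) = 1)] at h1
      have := Nat.dvd_one.mp h1
      have := (hp i).two_le
      omega
    have hcop : Nat.Coprime (p i ^ (e i - 1)) (N - 1) :=
      Nat.Coprime.pow_left _ (((hp i).coprime_iff_not_dvd).mpr hpnd)
    have hdvd1 : orderOf u ∣ Nat.gcd (p i ^ (e i - 1)) (N - 1) := Nat.dvd_gcd hord1 hord2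
    rw [Nat.Coprime.gcd_eq_one hcop] at hdvd1
    exact orderOf_eq_one_iff.mp (Nat.dvd_one.mp hdvd1)
  -- global: c = 1
  have hcast : ∀ i, ZMod.castHom (pe_dvd i) (ZMod (p i ^ e i)) ((c : ZMod N) - 1) = 0 := by
    intro i
    have h1 : ZMod.castHom (pe_dvd i) (ZMod (p i ^ e i)) (c : ZMod N) = 1 := by
      have := congrArg (Units.val) (key i)
      rwa [ZMod.unitsMap_def, Units.coe_map, Units.val_one] at this
    rw [map_sub, map_one, h1, sub_self]
  set x : ZMod N := (c : ZMod N) - 1 with hxdef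
  have hvdvd : ∀ i, p i ^ e i ∣ x.val := by
    intro i
    haveI : NeZero (p i ^ e i) := ⟨pow_ne_zero _ (by have := (hp i).two_le; omega)⟩
    have hx : ((x.val : ℕ) : ZMod N) = x := ZMod.natCast_rightInverse x
    have h0 : ((x.val : ℕ) : ZMod (p i ^ e i)) = 0 := by
      have := hcast i
      rw [← hx] at this
      rwa [map_natCast] at this
    exact (ZMod.natCast_eq_zero_iff _ _).mp h0
  have hNdvd : N ∣ x.val := by
    have hprod : (∏ i, p i ^ e i) ∣ x.val := by
      apply my_prod_dvd
      · intro i _ j _ hij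
        exact Nat.Coprime.pow _ _
          ((Nat.coprime_primes (hp i) (hp j)).mpr (fun hpe => hij (hinj hpe)))
      · exact fun i _ => hvdvd i
    rwa [← hNfact] at hprod
  have hvlt : x.val < N := ZMod.val_lt x
  have hv0 : x.val = 0 := by
    rcases Nat.eq_zero_or_pos x.val with h | h
    · exact h
    · have := Nat.le_of_dvd h hNdvd; omega
  have hx0 : x = 0 := by
    have := ZMod.natCast_rightInverse (n := N) x
    rw [hv0] at this
    simpa using this.symm
  have : (c : ZMod N) = 1 := by
    have := hx0
    rw [hxdef] at this
    linear_combination (norm := ring_nf) this -- fallback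
  exact Units.ext (by rw [this, Units.val_one])

lemma my_bad_residues {p M eN N D : ℕ} (hp : p.Prime) (hpM : ¬ p ∣ M) (hM : 2 ≤ M)
    (hN : N = M * p ^ eN)
    (fi : Polynomial (ZMod p)) (hfi : Irreducible fi) (hfD : fi.natDegree = D)
    (hfm : fi.Monic) :
    ∃ Fi : Finset (Polynomial (ZMod p)), Fi.card ≤ M ∧
      ∀ h : Polynomial (ZMod p), h.degree < (D : WithBot ℕ) →
        fi ∣ ((h + 1) ^ N - (h ^ N + 1)) → h ∈ Fi := by
  classical
  haveI : Fact p.Prime := ⟨hp⟩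
  set I : Ideal (Polynomial (ZMod p)) := Ideal.span {fi} with hI
  haveI hImax : I.IsMaximal := PrincipalIdealRing.isMaximal_of_irreducible hfi
  haveI : Nontrivial (Polynomial (ZMod p) ⧸ I) := Ideal.Quotient.nontrivial_iff.mpr hImax.ne_top
  set K := Polynomial (ZMod p) ⧸ I with hK
  set mk : Polynomial (ZMod p) →+* K := Ideal.Quotient.mk I with hmk
  haveI hKchar : CharP K p := charP_of_injective_ringHom
    (RingHom.injective (mk.comp (Polynomial.C : ZMod p →+* Polynomial (ZMod p)))) p
  -- the polynomial g over K
  set g : Polynomial K := (X + 1) ^ M - (X ^ M + 1) with hg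
  have hMK : (M : K) ≠ 0 := by
    intro h0
    exact hpM ((CharP.cast_eq_zero_iff K p M).mp h0)
  have hgne : g ≠ 0 := by
    intro h0
    have hc : g.coeff (M - 1) = (M : K) := by
      rw [hg, Polynomial.coeff_sub, Polynomial.coeff_add,
        Polynomial.coeff_X_add_one_pow, Polynomial.coeff_X_pow, Polynomial.coeff_one,
        if_neg (by omega), if_neg (by omega)]
      rw [(by omega : M - 1 = M - (1 : ℕ)), Nat.choose_symm (by omega), Nat.choose_one_right]
      push_cast; ring
    rw [h0] at hc
    simp at hc
    exact hMK hc.symm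
  have hgdeg : g.natDegree ≤ M := by
    apply le_trans (Polynomial.natDegree_sub_le _ _)
    apply max_le
    · apply le_trans (Polynomial.natDegree_pow_le)
      have h1 : ((X : Polynomial K) + 1).natDegree ≤ 1 := by
        apply le_trans (Polynomial.natDegree_add_le _ _)
        simp
      calc M * ((X : Polynomial K) + 1).natDegree ≤ M * 1 := Nat.mul_le_mul_left M h1
      _ = M := by omega
    · apply le_trans (Polynomial.natDegree_add_le _ _)
      simp
  -- roots
  set T : Finset K := g.roots.toFinset with hT
  have hTcard : T.card ≤ M := by
    apply le_trans (Multiset.toFinset_card_le _)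
    exact le_trans (Polynomial.card_roots' g) hgdeg
  -- section of mk
  have hsec : ∀ z : K, ∃ q : Polynomial (ZMod p), mk q = z := Ideal.Quotient.mk_surjective
  set lift : K → Polynomial (ZMod p) := fun z => (hsec z).choose %ₘ fi with hlift
  have hlift_mk : ∀ z, mk (lift z) = z := by
    intro z
    have h1 : mk ((hsec z).choose %ₘ fi) = mk (hsec z).choose := by
      have hsplit := Polynomial.modByMonic_add_div (hsec z).choose fi
      have : (hsec z).choose %ₘ fi = (hsec z).choose - fi * ((hsec z).choose /ₘ fi) := by
        linear_combination hsplit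
      rw [this, map_sub, map_mul]
      have : mk fi = 0 := by
        rw [hmk, Ideal.Quotient.eq_zero_iff_mem, hI]
        exact Ideal.subset_span rfl
      rw [this, zero_mul, sub_zero]
    rw [hlift, h1, (hsec z).choose_spec]
  refine ⟨T.image lift, le_trans (Finset.card_image_le) hTcard, ?_⟩
  intro h hdeg hdvdh
  -- z := mk h is a root of g
  have hz : mk h ∈ T := by
    rw [hT, Multiset.mem_toFinset]
    rw [Polynomial.mem_roots hgne]
    -- IsRoot g (mk h)
    have hcond : (mk h + 1) ^ N = (mk h) ^ N + 1 := by
      have hz0 : mk ((h + 1) ^ N - (h ^ N + 1)) = 0 := by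
        rw [hmk, Ideal.Quotient.eq_zero_iff_mem, hI, Ideal.mem_span_singleton]
        exact hdvdh
      simp only [map_sub, map_pow, map_add, map_one] at hz0
      exact sub_eq_zero.mp hz0
    -- Frobenius descent
    have hfrob : ((mk h + 1) ^ M) ^ p ^ eN = ((mk h) ^ M + 1) ^ p ^ eN := by
      rw [← pow_mul, ← hN, add_pow_char_pow, one_pow, ← pow_mul, ← hN]
      exact hcond
    have hMeq : (mk h + 1) ^ M = (mk h) ^ M + 1 := by
      have hsub : ((mk h + 1) ^ M - ((mk h) ^ M + 1)) ^ p ^ eN = 0 := by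
        rw [sub_pow_char_pow, hfrob, sub_self]
      have := pow_eq_zero_iff (pow_ne_zero eN hp.ne_zero) |>.mp hsub
      linear_combination this
    rw [Polynomial.IsRoot, hg]
    simp only [Polynomial.eval_sub, Polynomial.eval_add, Polynomial.eval_pow,
      Polynomial.eval_X, Polynomial.eval_one]
    rw [hMeq]; ring
  -- h = lift (mk h)
  have hhl : h = lift (mk h) := by
    have hdvd2 : fi ∣ (lift (mk h) - h) := by
      have hmem : lift (mk h) - h ∈ I := by
        rw [← Ideal.Quotient.eq_zero_iff_mem]
        show mk (lift (mk h) - h) = 0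
        rw [map_sub, hlift_mk, sub_self]
      exact Ideal.mem_span_singleton.mp hmem
    have hdegl : (lift (mk h)).degree < (D : WithBot ℕ) := by
      rw [hlift]
      have := Polynomial.degree_modByMonic_lt (hsec (mk h)).choose hfm
      rwa [Polynomial.degree_eq_natDegree hfm.ne_zero, hfD] at this
    have hdegsub : (lift (mk h) - h).degree < (D : WithBot ℕ) :=
      lt_of_le_of_lt (Polynomial.degree_sub_le _ _) (max_lt hdegl hdeg)
    rcases hdvd2 with ⟨q, hq⟩
    by_cases hq0 : lift (mk h) - h = 0
    · exact (sub_eq_zero.mp hq0).symm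
    · exfalso
      have hd := Polynomial.degree_le_of_dvd ⟨q, hq⟩ hq0
      rw [Polynomial.degree_eq_natDegree hfm.ne_zero, hfD] at hd
      exact absurd (lt_of_le_of_lt hd hdegsub) (lt_irrefl _)
  rw [hhl]
  exact Finset.mem_image_of_mem _ hz

/-- Let `N = ∏ i, p i ^ e i` be an odd composite number with `r ≥ 2` distinct prime factors,
write `N - 1 = 2^s * t` with `t` odd, and let `f ∈ (ℤ/Nℤ)[x]` be monic of degree `D ≥ 1`
with irreducible reduction modulo each `p i`. If `W` is the number of Miller–Rabin
nonwitnesses and `B` is the number of polynomials `h` with `deg h < D` such that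
`(h+1)^N ≡ h^N + 1 (mod f)`, then `2^((r-1)D) * W^D * B < (N-1)^D * N^r`. -/
theorem stmt_7 (N : ℕ) (hodd : Odd N) (hN : 1 < N) (hcomp : ¬ N.Prime)
    (r : ℕ) (hr : 2 ≤ r) (p e : Fin r → ℕ) (hp : ∀ i, (p i).Prime)
    (hinj : Function.Injective p) (he : ∀ i, 1 ≤ e i) (hNfact : N = ∏ i, p i ^ e i)
    (hdvd : ∀ i, p i ∣ N)
    (s t : ℕ) (ht : Odd t) (hst : N - 1 = 2 ^ s * t)
    (D : ℕ) (hD : 1 ≤ D) (f : Polynomial (ZMod N)) (hmonic : f.Monic)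
    (hdeg : f.natDegree = D)
    (hirr : ∀ i, Irreducible (f.map (ZMod.castHom (hdvd i) (ZMod (p i))))) :
    2 ^ ((r - 1) * D) *
      {a : (ZMod N)ˣ | (a : ZMod N) ^ t = 1 ∨
        ∃ j < s, (a : ZMod N) ^ (2 ^ j * t) = -1}.ncard ^ D *
      {h : Polynomial (ZMod N) |
        h.degree < (D : WithBot ℕ) ∧ f ∣ ((h + 1) ^ N - (h ^ N + 1))}.ncard
      < (N - 1) ^ D * N ^ r := by
  classical
  haveI : NeZero N := ⟨by omega⟩
  haveI instFact : ∀ i, Fact (p i).Prime := fun i => ⟨hp i⟩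
  haveI instNZ : ∀ i, NeZero (p i) := fun i => ⟨(hp i).ne_zero⟩
  have hpodd : ∀ i, 2 < p i := by
    intro i
    rcases Nat.lt_or_ge 2 (p i) with h | h
    · exact h
    · exfalso
      have h2 := (hp i).two_le
      have : p i = 2 := by omega
      rw [Nat.odd_iff] at hodd
      have := this ▸ hdvd i
      omega
  have hs1 : 1 ≤ s := by
    rcases Nat.eq_zero_or_pos s with h0 | h
    · rw [h0, pow_zero, one_mul] at hst
      have h1 := Nat.odd_iff.mp hodd
      have h2 := Nat.odd_iff.mp ht
      omega
    · exact h
  have ht1 : 1 ≤ t := by have := Nat.odd_iff.mp ht; omega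
  -- ===================== Part A : Miller-Rabin =====================
  set P : ℕ → Prop := fun j => ∃ a : (ZMod N)ˣ, a ^ (2 ^ j * t) = -1 with hPdef
  have hP0 : P 0 := by
    refine ⟨-1, ?_⟩
    rw [pow_zero, one_mul]
    exact Odd.neg_one_pow ht
  set j0 : ℕ := Nat.findGreatest P (s - 1) with hj0def
  have hPj0 : P j0 := Nat.findGreatest_spec (Nat.zero_le _) hP0
  have hj0le : j0 ≤ s - 1 := Nat.findGreatest_le _
  have hj0max : ∀ j < s, P j → j ≤ j0 := fun j hj hPj =>
    Nat.le_findGreatest (by omega) hPj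
  set m : ℕ := 2 ^ j0 * t with hmdef
  have hmpos : 0 < m := by positivity
  have hmdvd : m ∣ N - 1 := by
    rw [hst]
    exact mul_dvd_mul (pow_dvd_pow 2 (by omega)) dvd_rfl
  obtain ⟨b, hb⟩ := hPj0
  -- every nonwitness a satisfies a^m = ±1
  have hNW : ∀ a : (ZMod N)ˣ,
      ((a : ZMod N) ^ t = 1 ∨ ∃ j < s, (a : ZMod N) ^ (2 ^ j * t) = -1) →
      a ^ m = 1 ∨ a ^ m = -1 := by
    intro a ha
    rcases ha with h1 | ⟨j, hj, h2⟩
    · left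
      have hat : a ^ t = 1 := Units.ext (by
        rw [Units.val_pow_eq_pow_val, h1, Units.val_one])
      rw [hmdef, mul_comm, pow_mul, hat, one_pow]
    · have haj : a ^ (2 ^ j * t) = -1 := Units.ext (by
        rw [Units.val_pow_eq_pow_val, h2, Units.val_neg, Units.val_one])
      have hjle : j ≤ j0 := hj0max j hj ⟨a, haj⟩
      by_cases hjeq : j = j0
      · right; rw [hmdef, ← hjeq]; exact haj
      · left
        have h2p : 2 ^ j * 2 ^ (j0 - j) = 2 ^ j0 := by
          rw [← pow_add]; congr 1; omega
        have hcalc : a ^ m = (a ^ (2 ^ j * t)) ^ (2 ^ (j0 - j)) := by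
          rw [← pow_mul]; congr 1
          rw [hmdef, ← h2p]; ring
        rw [hcalc, haj]
        apply Even.neg_one_pow
        refine (Nat.even_pow).mpr ⟨even_two, by omega⟩
  -- per-prime: 2^(j0+1) divides p i - 1
  have h2pj : ∀ i, 2 ^ (j0 + 1) ∣ p i - 1 := by
    intro i
    haveI : Fact (p i).Prime := ⟨hp i⟩
    haveI : Fact (2 < p i) := ⟨hpodd i⟩
    set y : (ZMod (p i))ˣ := (ZMod.unitsMap (hdvd i) b) ^ t with hydef
    have hmapneg : ZMod.unitsMap (hdvd i) (-1) = -1 := Units.ext (by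
      rw [ZMod.unitsMap_def, Units.coe_map, MonoidHom.coe_coe, Units.val_neg, Units.val_one,
        map_neg, map_one, Units.val_neg, Units.val_one])
    have hym : y ^ (2 ^ j0) = -1 := by
      rw [hydef, ← pow_mul, mul_comm t, ← hmdef, ← map_pow, hb, hmapneg]
    have hy2 : y ^ (2 ^ (j0 + 1)) = 1 := by
      rw [pow_succ, pow_mul, hym]
      simp
    have hyne : y ^ (2 ^ j0) ≠ 1 := by
      rw [hym]
      intro hcon
      have hval := congrArg Units.val hcon
      rw [Units.val_neg, Units.val_one] at hval
      exact ZMod.neg_one_ne_one hval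
    have hord : orderOf y = 2 ^ (j0 + 1) := by
      have hdvd' : orderOf y ∣ 2 ^ (j0 + 1) := orderOf_dvd_of_pow_eq_one hy2
      rcases (Nat.dvd_prime_pow Nat.prime_two).mp hdvd' with ⟨k, hk, hoe⟩
      have hknle : ¬ k ≤ j0 := by
        intro hkle
        exact hyne (orderOf_dvd_iff_pow_eq_one.mp (hoe ▸ pow_dvd_pow 2 hkle))
      have : k = j0 + 1 := by omega
      rw [hoe, this]
    have := orderOf_dvd_card (x := y)
    rwa [hord, ZMod.card_units] at this
  -- per-prime: 2 * gcd m (p i - 1) divides p i - 1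
  have hgcd2 : ∀ i, 2 * Nat.gcd m (p i - 1) ∣ p i - 1 := by
    intro i
    obtain ⟨w, hw⟩ := h2pj i
    have ht2 : Nat.Coprime 2 t := Nat.coprime_two_left.mpr ht
    have hgw : Nat.gcd m (p i - 1) = 2 ^ j0 * Nat.gcd t w := by
      rw [hmdef, hw, pow_succ, mul_assoc, Nat.gcd_mul_left]
      congr 1
      exact Nat.Coprime.gcd_mul_left_cancel_right w ht2
    rw [hgw, hw, pow_succ]
    have h1 : 2 * (2 ^ j0 * Nat.gcd t w) ∣ 2 * (2 ^ j0 * w) :=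
      mul_dvd_mul_left _ (mul_dvd_mul_left _ (Nat.gcd_dvd_right t w))
    have h2 : 2 * (2 ^ j0 * w) = 2 ^ j0 * 2 * w := by ring
    exact h2 ▸ h1
  -- counting the nonwitness set
  set NWfin : Finset (ZMod N)ˣ := Finset.univ.filter (fun a : (ZMod N)ˣ =>
    (a : ZMod N) ^ t = 1 ∨ ∃ j < s, (a : ZMod N) ^ (2 ^ j * t) = -1) with hNWdef
  have hNWncard : {a : (ZMod N)ˣ | (a : ZMod N) ^ t = 1 ∨
      ∃ j < s, (a : ZMod N) ^ (2 ^ j * t) = -1}.ncard = NWfin.card := by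
    rw [hNWdef]
    rw [show {a : (ZMod N)ˣ | (a : ZMod N) ^ t = 1 ∨
      ∃ j < s, (a : ZMod N) ^ (2 ^ j * t) = -1} = ↑(Finset.univ.filter (fun a : (ZMod N)ˣ =>
      (a : ZMod N) ^ t = 1 ∨ ∃ j < s, (a : ZMod N) ^ (2 ^ j * t) = -1)) by
        ext a; simp]
    rw [Set.ncard_coe_finset]
  -- bound each sign class
  have hA : ∀ ε : (ZMod N)ˣ, (Finset.univ.filter fun a : (ZMod N)ˣ => a ^ m = ε).card
      ≤ ∏ i, Nat.gcd m (p i - 1) := by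
    intro ε
    have hmaps : ∀ a ∈ (Finset.univ.filter fun a : (ZMod N)ˣ => a ^ m = ε),
        (fun (a : (ZMod N)ˣ) (i : Fin r) => ZMod.unitsMap (hdvd i) a) a ∈
        Fintype.piFinset (fun i => Finset.univ.filter
          (fun x : (ZMod (p i))ˣ => x ^ m = ZMod.unitsMap (hdvd i) ε)) := by
      intro a ha
      rw [Fintype.mem_piFinset]
      intro i
      simp only [Finset.mem_filter, Finset.mem_univ, true_and]
      have haε : a ^ m = ε := (Finset.mem_filter.mp ha).2
      rw [← map_pow, haε]
    have hinjOn : Set.InjOn (fun (a : (ZMod N)ˣ) (i : Fin r) => ZMod.unitsMap (hdvd i) a)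
        (Finset.univ.filter fun a : (ZMod N)ˣ => a ^ m = ε) := by
      intro a ha b hb hab
      simp only [Finset.coe_filter, Set.mem_setOf_eq] at ha hb
      have haε : a ^ m = ε := ha.2
      have hbε : b ^ m = ε := hb.2
      have hc : (a * b⁻¹) ^ m = 1 := by
        rw [mul_pow, inv_pow, haε, hbε, mul_inv_cancel]
      have hc1 : (a * b⁻¹) ^ (N - 1) = 1 := by
        obtain ⟨k, hk⟩ := hmdvd
        rw [hk, pow_mul, hc, one_pow]
      have hc2 : ∀ i, ZMod.unitsMap (hdvd i) (a * b⁻¹) = 1 := by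
        intro i
        have hfi := congrFun hab i
        simp only at hfi
        rw [map_mul, map_inv, hfi, mul_inv_cancel]
      have := my_core_inj hN hp hinj he hNfact hdvd _ hc1 hc2
      exact mul_inv_eq_one.mp this
    refine le_trans (Finset.card_le_card_of_injOn _ hmaps hinjOn) ?_
    rw [Fintype.card_piFinset]
    apply Finset.prod_le_prod'
    intro i _
    haveI : Fact (p i).Prime := ⟨hp i⟩
    exact my_units_pow_card_le m hmpos _
  have hWbound : 2 ^ (r - 1) * NWfin.card ≤ ∏ i, (p i - 1) := by
    have hsub : NWfin ⊆ (Finset.univ.filter fun a : (ZMod N)ˣ => a ^ m = 1)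
        ∪ (Finset.univ.filter fun a : (ZMod N)ˣ => a ^ m = -1) := by
      intro a ha
      rw [hNWdef, Finset.mem_filter] at ha
      rcases hNW a ha.2 with h | h
      · exact Finset.mem_union_left _ (Finset.mem_filter.mpr ⟨Finset.mem_univ _, h⟩)
      · exact Finset.mem_union_right _ (Finset.mem_filter.mpr ⟨Finset.mem_univ _, h⟩)
    have hcard1 : NWfin.card ≤ 2 * ∏ i, Nat.gcd m (p i - 1) := by
      calc NWfin.card ≤ _ := Finset.card_le_card hsub
      _ ≤ _ + _ := Finset.card_union_le _ _
      _ ≤ 2 * ∏ i, Nat.gcd m (p i - 1) := by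
          have := hA 1
          have := hA (-1)
          omega
    calc 2 ^ (r - 1) * NWfin.card ≤ 2 ^ (r - 1) * (2 * ∏ i, Nat.gcd m (p i - 1)) :=
          Nat.mul_le_mul_left _ hcard1
    _ = 2 ^ r * ∏ i, Nat.gcd m (p i - 1) := by
        rw [← mul_assoc, ← pow_succ]
        congr 2
        omega
    _ = ∏ i, (2 * Nat.gcd m (p i - 1)) := by
        rw [Finset.prod_mul_distrib, Finset.prod_const, Finset.card_univ, Fintype.card_fin]
    _ ≤ ∏ i, (p i - 1) := by
        apply Finset.prod_le_prod'
        intro i _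
        apply Nat.le_of_dvd (by have := hpodd i; omega) (hgcd2 i)
  -- ===================== Part B : Agrawal–Biswas =====================
  haveI : Nontrivial (Fin r) := ⟨⟨⟨0, by omega⟩, ⟨1, by omega⟩, by simp [Fin.ext_iff]⟩⟩
  haveI : Nonempty (Fin r) := ⟨⟨0, by omega⟩⟩
  set Pprod : ℕ := ∏ i, p i with hPproddef
  set Q : ℕ := ∏ i, p i ^ (e i - 1) with hQdef
  have hNPQ : N = Q * Pprod := by
    rw [hNfact, hQdef, hPproddef, ← Finset.prod_mul_distrib]
    apply Finset.prod_congr rfl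
    intro i _
    rw [← pow_succ, Nat.sub_add_cancel (he i)]
  have hPpos : 0 < Pprod := Finset.prod_pos (fun i _ => (hp i).pos)
  have hQpos : 0 < Q := Finset.prod_pos (fun i _ => pow_pos (hp i).pos _)
  set Mi : Fin r → ℕ := fun i => ∏ j ∈ Finset.univ.erase i, p j ^ e j with hMidef
  have hMiN : ∀ i, N = p i ^ e i * Mi i := by
    intro i
    rw [hNfact, hMidef]
    exact (Finset.mul_prod_erase Finset.univ _ (Finset.mem_univ i)).symm
  have hMiprod : (∏ i, Mi i) * N = N ^ r := by
    calc (∏ i, Mi i) * N = (∏ i, Mi i) * ∏ i, p i ^ e i := by rw [← hNfact]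
    _ = ∏ i, (Mi i * p i ^ e i) := by rw [← Finset.prod_mul_distrib]
    _ = ∏ _i : Fin r, N := Finset.prod_congr rfl (fun i _ => by rw [mul_comm, ← hMiN i])
    _ = N ^ r := by rw [Finset.prod_const, Finset.card_univ, Fintype.card_fin]
  have hpMi : ∀ i, ¬ p i ∣ Mi i := by
    intro i hdvdM
    have hcop : Nat.Coprime (p i) (Mi i) := by
      apply Nat.Coprime.prod_right
      intro j hj
      have hij : j ≠ i := (Finset.mem_erase.mp hj).1
      exact Nat.Coprime.pow_right _
        ((Nat.coprime_primes (hp i) (hp j)).mpr (fun hpe => hij (hinj hpe).symm))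
    have hg1 := Nat.dvd_gcd (dvd_refl (p i)) hdvdM
    rw [Nat.Coprime] at hcop
    rw [hcop] at hg1
    have := (hp i).two_le
    have := Nat.dvd_one.mp hg1
    omega
  have hMi2 : ∀ i, 2 ≤ Mi i := by
    intro i
    obtain ⟨j, hj⟩ := exists_ne i
    have hjmem : j ∈ Finset.univ.erase i := Finset.mem_erase.mpr ⟨hj, Finset.mem_univ j⟩
    have h1 : p j ^ e j ≤ Mi i := by
      rw [hMidef]
      exact Finset.single_le_prod'
        (fun k _ => Nat.one_le_iff_ne_zero.mpr (pow_ne_zero _ (hp k).ne_zero)) hjmem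
    have h2 : p j ≤ p j ^ e j := Nat.le_self_pow (by have := he j; omega) _
    have := (hp j).two_le
    omega
  have hbr : ∀ i, ∃ Fi : Finset (Polynomial (ZMod (p i))), Fi.card ≤ Mi i ∧
      ∀ h : Polynomial (ZMod (p i)), h.degree < (D : WithBot ℕ) →
        (f.map (ZMod.castHom (hdvd i) (ZMod (p i)))) ∣ ((h + 1) ^ N - (h ^ N + 1)) → h ∈ Fi := by
    intro i
    apply my_bad_residues (hp i) (hpMi i) (hMi2 i) (by rw [mul_comm]; exact hMiN i)
      _ (hirr i) ?_ (hmonic.map _)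
    rw [Polynomial.Monic.natDegree_map hmonic, hdeg]
  choose Fi hFicard hFimem using hbr
  set SB : Set (Polynomial (ZMod N)) := {h : Polynomial (ZMod N) |
    h.degree < (D : WithBot ℕ) ∧ f ∣ ((h + 1) ^ N - (h ^ N + 1))} with hSBdef
  have hcoefext : ∀ h h' : Polynomial (ZMod N), h.degree < (D : WithBot ℕ) →
      h'.degree < (D : WithBot ℕ) →
      (∀ k : Fin D, h.coeff k = h'.coeff k) → h = h' := by
    intro h h' hh hh' hk
    ext k
    rcases Nat.lt_or_ge k D with hlt | hge
    · exact hk ⟨k, hlt⟩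
    · have hDk : (D : WithBot ℕ) ≤ (k : WithBot ℕ) := by exact_mod_cast hge
      rw [Polynomial.coeff_eq_zero_of_degree_lt (lt_of_lt_of_le hh hDk),
        Polynomial.coeff_eq_zero_of_degree_lt (lt_of_lt_of_le hh' hDk)]
  have hSBfin : SB.Finite := by
    apply Set.Finite.of_finite_image (f := fun h (k : Fin D) => h.coeff k) (Set.toFinite _)
    intro h hh h' hh' hkeq
    exact hcoefext h h' hh.1 hh'.1 (fun k => congrFun hkeq k)
  set SBfin := hSBfin.toFinset with hSBfindef
  have hSBncard : SB.ncard = SBfin.card := Set.ncard_eq_toFinset_card SB hSBfin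
  set κfin : Finset (ZMod N) := Finset.univ.filter
    (fun c => ∀ i, ZMod.castHom (hdvd i) (ZMod (p i)) c = 0) with hκdef
  have hPdvdval : ∀ c ∈ κfin, Pprod ∣ c.val := by
    intro c hc
    rw [hκdef, Finset.mem_filter] at hc
    have hdvd' : ∀ i, p i ∣ c.val := by
      intro i
      have h1 := hc.2 i
      rw [show c = ((c.val : ℕ) : ZMod N) from (ZMod.natCast_rightInverse c).symm] at h1
      rw [map_natCast] at h1
      exact (ZMod.natCast_eq_zero_iff _ _).mp h1
    rw [hPproddef]
    apply my_prod_dvd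
    · intro i _ j _ hij
      exact (Nat.coprime_primes (hp i) (hp j)).mpr (fun hpe => hij (hinj hpe))
    · exact fun i _ => hdvd' i
  have hκcard : κfin.card ≤ Q := by
    have hcc := Finset.card_le_card_of_injOn (s := κfin) (fun c : ZMod N => c.val / Pprod)
      (t := Finset.range Q) ?_ ?_
    · exact le_trans hcc (by rw [Finset.card_range])
    · intro c hc
      rw [Finset.mem_coe, Finset.mem_range, Nat.div_lt_iff_lt_mul hPpos]
      calc c.val < N := ZMod.val_lt c
      _ = Q * Pprod := hNPQ
    · intro c hc c' hc' hcc
      simp only at hcc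
      have e1 := Nat.mul_div_cancel' (hPdvdval c (Finset.mem_coe.mp hc))
      have e2 := Nat.mul_div_cancel' (hPdvdval c' (Finset.mem_coe.mp hc'))
      have h1 : c.val = c'.val := by rw [← e1, ← e2, hcc]
      exact ZMod.val_injective N h1
  set Φ : Polynomial (ZMod N) → ((i : Fin r) → Polynomial (ZMod (p i))) :=
    fun h i => h.map (ZMod.castHom (hdvd i) (ZMod (p i))) with hΦdef
  have hfiber : ∀ v ∈ SBfin.image Φ, (SBfin.filter fun h => Φ h = v).card ≤ Q ^ D := by
    intro v hv
    obtain ⟨h0, h0mem, h0eq⟩ := Finset.mem_image.mp hv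
    have h0deg : h0.degree < (D : WithBot ℕ) := (hSBfin.mem_toFinset.mp h0mem).1
    have hmaps : ∀ h ∈ SBfin.filter (fun h => Φ h = v),
        (fun (h : Polynomial (ZMod N)) (k : Fin D) => (h - h0).coeff k) h ∈
          Fintype.piFinset (fun _ : Fin D => κfin) := by
      intro h hh
      rw [Finset.mem_filter] at hh
      rw [Fintype.mem_piFinset]
      intro k
      rw [hκdef, Finset.mem_filter]
      refine ⟨Finset.mem_univ _, ?_⟩
      intro i
      have hmapeq : Φ h i = Φ h0 i := by rw [hh.2, ← h0eq]
      have hz : (h - h0).map (ZMod.castHom (hdvd i) (ZMod (p i))) = 0 := by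
        rw [hΦdef] at hmapeq
        simp only at hmapeq
        rw [Polynomial.map_sub, hmapeq, sub_self]
      show ZMod.castHom (hdvd i) (ZMod (p i)) ((h - h0).coeff k) = 0
      rw [← Polynomial.coeff_map, hz, Polynomial.coeff_zero]
    have hinjOn2 : Set.InjOn (fun (h : Polynomial (ZMod N)) (k : Fin D) => (h - h0).coeff k)
        (SBfin.filter (fun h => Φ h = v)) := by
      intro a ha b hb hab
      rw [Finset.mem_coe, Finset.mem_filter] at ha hb
      have hadeg : a.degree < (D : WithBot ℕ) := (hSBfin.mem_toFinset.mp ha.1).1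
      have hbdeg : b.degree < (D : WithBot ℕ) := (hSBfin.mem_toFinset.mp hb.1).1
      have hd1 : (a - h0).degree < (D : WithBot ℕ) :=
        lt_of_le_of_lt (Polynomial.degree_sub_le _ _) (max_lt hadeg h0deg)
      have hd2 : (b - h0).degree < (D : WithBot ℕ) :=
        lt_of_le_of_lt (Polynomial.degree_sub_le _ _) (max_lt hbdeg h0deg)
      have hsub : a - h0 = b - h0 := hcoefext _ _ hd1 hd2 (fun k => congrFun hab k)
      exact sub_left_inj.mp hsub
    refine le_trans (Finset.card_le_card_of_injOn _ hmaps hinjOn2) ?_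
    rw [Fintype.card_piFinset]
    calc ∏ _k : Fin D, κfin.card ≤ ∏ _k : Fin D, Q := Finset.prod_le_prod' (fun _ _ => hκcard)
    _ = Q ^ D := by rw [Finset.prod_const, Finset.card_univ, Fintype.card_fin]
  have hcount : SBfin.card ≤ Q ^ D * (SBfin.image Φ).card :=
    Finset.card_le_mul_card_image SBfin (Q ^ D) hfiber
  have himg : (SBfin.image Φ).card ≤ ∏ i, Mi i := by
    have hsub : SBfin.image Φ ⊆ Fintype.piFinset Fi := by
      intro v hv
      obtain ⟨h, hh, hveq⟩ := Finset.mem_image.mp hv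
      have hmem := hSBfin.mem_toFinset.mp hh
      rw [Fintype.mem_piFinset]
      intro i
      rw [← hveq]
      apply hFimem i
      · exact lt_of_le_of_lt (Polynomial.degree_map_le) hmem.1
      · have hmd := Polynomial.map_dvd (ZMod.castHom (hdvd i) (ZMod (p i))) hmem.2
        simpa [Polynomial.map_sub, Polynomial.map_add, Polynomial.map_pow,
          Polynomial.map_one] using hmd
    calc (SBfin.image Φ).card ≤ (Fintype.piFinset Fi).card := Finset.card_le_card hsub
    _ = ∏ i, (Fi i).card := Fintype.card_piFinset Fi
    _ ≤ ∏ i, Mi i := Finset.prod_le_prod' (fun i _ => hFicard i)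
  have hB : SBfin.card ≤ Q ^ D * ∏ i, Mi i := le_trans hcount (Nat.mul_le_mul_left _ himg)
  -- ===================== final arithmetic =====================
  have hkey : (∏ i, (p i - 1)) * Q ≤ N - 1 := by
    have hfact : ∀ i, (p i - 1) * p i ^ (e i - 1) + 1 ≤ p i ^ e i := by
      intro i
      have h2 : p i * p i ^ (e i - 1) = p i ^ e i := by
        rw [← pow_succ', Nat.sub_add_cancel (he i)]
      obtain ⟨k, hk⟩ : ∃ k, p i = k + 1 := ⟨p i - 1, by have := (hp i).two_le; omega⟩
      have h4 : 1 ≤ p i ^ (e i - 1) := Nat.one_le_iff_ne_zero.mpr (pow_ne_zero _ (hp i).ne_zero)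
      have h5 : (p i - 1) * p i ^ (e i - 1) + p i ^ (e i - 1) = p i ^ e i := by
        rw [hk]
        simp only [Nat.add_sub_cancel]
        calc k * (k+1) ^ (e i - 1) + (k+1) ^ (e i - 1) = (k + 1) * (k+1) ^ (e i - 1) := by ring
        _ = (k + 1) ^ e i := by rw [← hk, ← hk] at *; exact h2
      omega
    have hmain : (∏ i, ((p i - 1) * p i ^ (e i - 1))) + 1 ≤ ∏ i, p i ^ e i := by
      calc (∏ i, ((p i - 1) * p i ^ (e i - 1))) + 1
          ≤ ∏ i, ((p i - 1) * p i ^ (e i - 1) + 1) :=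
            my_prod_add_one_le _ Finset.univ_nonempty _
      _ ≤ ∏ i, p i ^ e i := Finset.prod_le_prod' (fun i _ => hfact i)
    have heq2 : (∏ i, (p i - 1)) * Q = ∏ i, ((p i - 1) * p i ^ (e i - 1)) := by
      rw [hQdef, ← Finset.prod_mul_distrib]
    rw [← hNfact] at hmain
    omega
  have hgoal2 : SB.ncard = SBfin.card := hSBncard
  rw [hNWncard, hgoal2]
  have hMipos : 0 < ∏ i, Mi i := Finset.prod_pos (fun i _ => by have := hMi2 i; omega)
  have hMilt : (∏ i, Mi i) < N ^ r := by
    calc (∏ i, Mi i) < (∏ i, Mi i) * 2 := by omega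
    _ ≤ (∏ i, Mi i) * N := Nat.mul_le_mul_left _ (by omega)
    _ = N ^ r := hMiprod
  calc 2 ^ ((r - 1) * D) * NWfin.card ^ D * SBfin.card
      = (2 ^ (r - 1) * NWfin.card) ^ D * SBfin.card := by rw [mul_pow, ← pow_mul]
  _ ≤ (∏ i, (p i - 1)) ^ D * (Q ^ D * ∏ i, Mi i) :=
      Nat.mul_le_mul (Nat.pow_le_pow_left hWbound D) hB
  _ = ((∏ i, (p i - 1)) * Q) ^ D * ∏ i, Mi i := by rw [mul_pow]; ring
  _ ≤ (N - 1) ^ D * ∏ i, Mi i :=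
      Nat.mul_le_mul_right _ (Nat.pow_le_pow_left hkey D)
  _ < (N - 1) ^ D * N ^ r := by
      have hpow : 0 < (N - 1) ^ D := pow_pos (by omega) D
      exact (mul_lt_mul_iff_right₀ hpow).mpr hMilt
end

section
/- Let k be an odd positive integer such that p = 2k + 1 and q = 6k + 1 are both prime, let N = pq, and let t = k(3k + 2) (the odd part of N − 1). Then the number of units a ∈ (ℤ/Nℤ)^× satisfying a^t = 1 is at least φ(N)/12; that is, 12 · #{a ∈ (ℤ/Nℤ)^× : a^t = 1} ≥ φ(N), where φ is Euler's totient function. -/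
open Subgroup

-- count lower bound in cyclic units group
lemma aux_card_pow_eq_one {P m d : ℕ} [Fact (Nat.Prime P)]
    (hcard : Nat.card (ZMod P)ˣ = m * d) (hd : 0 < d) :
    m ≤ {x : (ZMod P)ˣ | x ^ m = 1}.ncard := by
  obtain ⟨g, hg⟩ := IsCyclic.exists_ofOrder_eq_natCard (α := (ZMod P)ˣ)
  have hsub : (zpowers (g ^ d) : Set (ZMod P)ˣ) ⊆ {x : (ZMod P)ˣ | x ^ m = 1} := by
    rintro x ⟨n, rfl⟩
    show ((g ^ d) ^ n) ^ m = 1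
    rw [← zpow_natCast ((g ^ d) ^ n) m, ← zpow_mul, ← zpow_natCast g d, ← zpow_mul,
      ← orderOf_dvd_iff_zpow_eq_one, hg, hcard]
    exact ⟨n, by push_cast; ring⟩
  have hcard2 : ((zpowers (g ^ d) : Set (ZMod P)ˣ)).ncard = m := by
    rw [← Nat.card_coe_set_eq]
    have : Nat.card (zpowers (g ^ d)) = m := by
      rw [Nat.card_zpowers, orderOf_pow, hg, hcard, Nat.gcd_eq_right ⟨m, by ring⟩,
        Nat.mul_div_cancel _ hd]
    simpa using this
  calc m = ((zpowers (g ^ d) : Set (ZMod P)ˣ)).ncard := hcard2.symm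
    _ ≤ _ := Set.ncard_le_ncard hsub (Set.toFinite _)

/-- Let `k` be an odd positive integer with `p = 2k+1` and `q = 6k+1` both prime,
`N = pq`, and `t = k(3k+2)` the odd part of `N - 1`. Then the number of units
`a ∈ (ℤ/Nℤ)ˣ` with `a^t = 1` is at least `φ(N)/12`. -/
theorem stmt_9 (k : ℕ) (hk : Odd k) (hk0 : 0 < k)
    (hp : Nat.Prime (2 * k + 1)) (hq : Nat.Prime (6 * k + 1))
    (N t : ℕ) (hN : N = (2 * k + 1) * (6 * k + 1)) (ht : t = k * (3 * k + 2)) :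
    Nat.totient N ≤ 12 * {a : (ZMod N)ˣ | (a : ZMod N) ^ t = 1}.ncard := by
  subst hN ht
  set P := 2 * k + 1 with hP
  set Q := 6 * k + 1 with hQ
  haveI : Fact P.Prime := ⟨hp⟩
  haveI : Fact Q.Prime := ⟨hq⟩
  haveI : NeZero (P * Q) := ⟨by positivity⟩
  have hco : Nat.Coprime P Q := (Nat.coprime_primes hp hq).mpr (by omega)
  let r : ZMod (P * Q) ≃+* ZMod P × ZMod Q := ZMod.chineseRemainder hco
  let e : (ZMod (P * Q))ˣ ≃* (ZMod P)ˣ × (ZMod Q)ˣ :=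
    (Units.mapEquiv r.toMulEquiv).trans MulEquiv.prodUnits
  set S : Set (ZMod (P * Q))ˣ := {a | (a : ZMod (P * Q)) ^ (k * (3 * k + 2)) = 1} with hS
  set T : Set (ZMod (P * Q))ˣ := {a | a ^ k = 1} with hT
  set Sp : Set (ZMod P)ˣ := {x | x ^ k = 1} with hSp
  set Sq : Set (ZMod Q)ˣ := {y | y ^ k = 1} with hSq
  have hTS : T ⊆ S := by
    intro a ha
    simp only [hT, Set.mem_setOf_eq] at ha
    show (a : ZMod (P * Q)) ^ (k * (3 * k + 2)) = 1
    rw [← Units.val_pow_eq_pow_val, pow_mul, ha, one_pow, Units.val_one]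
  have hTpre : T = e ⁻¹' (Sp ×ˢ Sq) := by
    ext a
    simp only [hT, hSp, hSq, Set.mem_setOf_eq, Set.mem_preimage, Set.mem_prod]
    constructor
    · intro h
      constructor
      · have : (e a) ^ k = 1 := by rw [← map_pow, h, map_one]
        exact congrArg Prod.fst this
      · have : (e a) ^ k = 1 := by rw [← map_pow, h, map_one]
        exact congrArg Prod.snd this
    · rintro ⟨h1, h2⟩
      apply e.injective
      rw [map_pow, map_one]
      exact Prod.ext h1 h2
  have himg : e '' T = Sp ×ˢ Sq := by
    rw [hTpre, Set.image_preimage_eq _ e.surjective]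
  have hcardT : T.ncard = Sp.ncard * Sq.ncard := by
    rw [← Set.ncard_image_of_injective T e.injective, himg,
      ← Nat.card_coe_set_eq, ← Nat.card_coe_set_eq, ← Nat.card_coe_set_eq,
      Nat.card_congr (Equiv.Set.prod Sp Sq), Nat.card_prod]
  have hSpk : k ≤ Sp.ncard := by
    apply aux_card_pow_eq_one (d := 2) _ (by norm_num)
    rw [Nat.card_eq_fintype_card, ZMod.card_units_eq_totient, Nat.totient_prime hp]
    omega
  have hSqk : k ≤ Sq.ncard := by
    apply aux_card_pow_eq_one (d := 6) _ (by norm_num)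
    rw [Nat.card_eq_fintype_card, ZMod.card_units_eq_totient, Nat.totient_prime hq]
    omega
  have hST : T.ncard ≤ S.ncard := Set.ncard_le_ncard hTS (Set.toFinite _)
  have htot : Nat.totient (P * Q) = 12 * (k * k) := by
    rw [Nat.totient_mul hco, Nat.totient_prime hp, Nat.totient_prime hq]
    have h1 : P - 1 = 2 * k := by omega
    have h2 : Q - 1 = 6 * k := by omega
    rw [h1, h2]; ring
  calc Nat.totient (P * Q) = 12 * (k * k) := htot
    _ ≤ 12 * (Sp.ncard * Sq.ncard) := by
        exact Nat.mul_le_mul_left 12 (Nat.mul_le_mul hSpk hSqk)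
    _ = 12 * T.ncard := by rw [hcardT]
    _ ≤ 12 * S.ncard := Nat.mul_le_mul_left 12 hST
end

section
/- Let k be an odd positive integer such that p = 2k + 1 and q = 6k + 1 are both prime, let N = pq, and let t = k(3k + 2) (the odd part of N − 1). Then 21 · #{a ∈ (ℤ/Nℤ)^× : a^t = 1} ≥ N − 1. In particular, since every unit a with a^t = 1 is a Miller–Rabin nonwitness for N, the Miller–Rabin test applied to N fails with probability at least 1/21. -/
/-- Let `k` be an odd positive integer with `p = 2k+1` and `q = 6k+1` both prime,
`N = pq`, and `t = k(3k+2)` the odd part of `N - 1`. Then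
`21 * #{a ∈ (ℤ/Nℤ)ˣ : a^t = 1} ≥ N - 1`; in particular the Miller–Rabin test applied
to `N` fails with probability at least `1/21`. -/
theorem stmt_10 (k : ℕ) (hk : Odd k) (hk0 : 0 < k)
    (hp : Nat.Prime (2 * k + 1)) (hq : Nat.Prime (6 * k + 1))
    (N t : ℕ) (hN : N = (2 * k + 1) * (6 * k + 1)) (ht : t = k * (3 * k + 2)) :
    N - 1 ≤ 21 * {a : (ZMod N)ˣ | (a : ZMod N) ^ t = 1}.ncard := by
  subst hN ht
  haveI : Fact (Nat.Prime (2 * k + 1)) := ⟨hp⟩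
  haveI : Fact (Nat.Prime (6 * k + 1)) := ⟨hq⟩
  have hco : Nat.Coprime (2 * k + 1) (6 * k + 1) :=
    (Nat.coprime_primes hp hq).mpr (by omega)
  set S : Set (ZMod ((2 * k + 1) * (6 * k + 1)))ˣ :=
    {a | (a : ZMod ((2 * k + 1) * (6 * k + 1))) ^ (k * (3 * k + 2)) = 1} with hS
  -- the CRT multiplicative equivalence
  let e : (ZMod ((2 * k + 1) * (6 * k + 1)))ˣ ≃* (ZMod (2 * k + 1))ˣ × (ZMod (6 * k + 1))ˣ :=
    (Units.mapEquiv (ZMod.chineseRemainder hco).toMulEquiv).trans MulEquiv.prodUnits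
  -- generators
  obtain ⟨g, hg⟩ := IsCyclic.exists_generator (α := (ZMod (2 * k + 1))ˣ)
  obtain ⟨g', hg'⟩ := IsCyclic.exists_generator (α := (ZMod (6 * k + 1))ˣ)
  have hog : orderOf g = 2 * k := by
    rw [orderOf_eq_card_of_forall_mem_zpowers hg, Nat.card_eq_fintype_card, ZMod.card_units]
    omega
  have hog' : orderOf g' = 6 * k := by
    rw [orderOf_eq_card_of_forall_mem_zpowers hg', Nat.card_eq_fintype_card, ZMod.card_units]
    omega
    -- the injection
  have hmem : ∀ ij : Fin k × Fin k,
      e.symm (g ^ (2 * (ij.1 : ℕ)), g' ^ (6 * (ij.2 : ℕ))) ∈ S := by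
    intro ij
    have h1 : (g ^ (2 * (ij.1 : ℕ))) ^ (k * (3 * k + 2)) = 1 := by
      rw [← pow_mul, ← orderOf_dvd_iff_pow_eq_one, hog]
      exact ⟨(ij.1 : ℕ) * (3 * k + 2), by ring⟩
    have h2 : (g' ^ (6 * (ij.2 : ℕ))) ^ (k * (3 * k + 2)) = 1 := by
      rw [← pow_mul, ← orderOf_dvd_iff_pow_eq_one, hog']
      exact ⟨(ij.2 : ℕ) * (3 * k + 2), by ring⟩
    have : (e.symm (g ^ (2 * (ij.1 : ℕ)), g' ^ (6 * (ij.2 : ℕ)))) ^ (k * (3 * k + 2)) = 1 := by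
      rw [← map_pow, Prod.pow_mk, h1, h2, Prod.mk_one_one, map_one]
    simpa [hS, ← Units.val_pow_eq_pow_val, Units.val_eq_one] using this
  let f : Fin k × Fin k → S := fun ij =>
    ⟨e.symm (g ^ (2 * (ij.1 : ℕ)), g' ^ (6 * (ij.2 : ℕ))), hmem ij⟩
  have hf : Function.Injective f := by
    intro ⟨i, j⟩ ⟨i', j'⟩ hij
    simp only [f, Subtype.mk.injEq, EmbeddingLike.apply_eq_iff_eq, Prod.mk.injEq] at hij
    obtain ⟨h1, h2⟩ := hij
    rw [pow_eq_pow_iff_modEq, hog] at h1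
    rw [pow_eq_pow_iff_modEq, hog'] at h2
    have hi := i.2; have hi' := i'.2; have hj := j.2; have hj' := j'.2
    unfold Nat.ModEq at h1 h2
    rw [Nat.mod_eq_of_lt (by omega), Nat.mod_eq_of_lt (by omega)] at h1
    rw [Nat.mod_eq_of_lt (by omega), Nat.mod_eq_of_lt (by omega)] at h2
    simp only [Prod.mk.injEq]
    exact ⟨Fin.ext (by omega), Fin.ext (by omega)⟩
  have hcard : k * k ≤ S.ncard := by
    have h := Nat.card_le_card_of_injective f hf
    calc k * k = Nat.card (Fin k × Fin k) := by
            rw [Nat.card_eq_fintype_card, Fintype.card_prod, Fintype.card_fin]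
      _ ≤ Nat.card S := h
      _ = S.ncard := Nat.card_coe_set_eq S
  have key : (2 * k + 1) * (6 * k + 1) - 1 ≤ 21 * (k * k) := by
    have expand : (2 * k + 1) * (6 * k + 1) = 12 * (k * k) + 8 * k + 1 := by ring
    have h9 : 8 * k ≤ 9 * (k * k) := by nlinarith [hk0]
    omega
  exact key.trans (Nat.mul_le_mul_left 21 hcard)
end

section
/- Let p be a prime and let f ∈ (ℤ/pℤ)[x] be a monic polynomial of degree d ≥ 1. Let A denote the quotient ring (ℤ/pℤ)[x]/(f(x)) and let α be the image of x in A. Suppose there exist a ring automorphism σ of A and a natural number i coprime to d such that σ^i(α) = α^p, σ^d(α) = α, and for every prime number ℓ dividing d the element σ^{d/ℓ}(α) − α is a unit of A. Then f is irreducible over ℤ/pℤ. -/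
private lemma aux_pow_sub_one_dvd {p : ℕ} (hp : 2 ≤ p) :
    ∀ d e : ℕ, (p ^ e - 1 ∣ p ^ d - 1) → e ∣ d := by
  intro d
  induction d using Nat.strong_induction_on with
  | _ d ih =>
    intro e hdvd
    rcases Nat.eq_zero_or_pos e with he | he
    · subst he
      simp only [pow_zero, Nat.sub_self, Nat.zero_dvd] at hdvd
      have : p ^ d ≥ 1 := Nat.one_le_pow _ _ (by omega)
      have hpd : p ^ d = 1 := by omega
      have : d = 0 := by
        by_contra hd0
        have : p ^ d ≥ p ^ 1 := Nat.pow_le_pow_right (by omega) (by omega)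
        simp at this; omega
      simp [this]
    rcases lt_or_ge d e with hlt | hge
    · have h1 : p ^ d < p ^ e := Nat.pow_lt_pow_right (by omega) hlt
      have h2 : p ^ d - 1 < p ^ e - 1 := by
        have : p ^ d ≥ 1 := Nat.one_le_pow _ _ (by omega)
        omega
      have := Nat.eq_zero_of_dvd_of_lt hdvd h2
      have hge1 : p ^ d ≥ 1 := Nat.one_le_pow _ _ (by omega)
      have hpd : p ^ d = 1 := by omega
      have hd0 : d = 0 := by
        by_contra hd0
        have : p ^ d ≥ p ^ 1 := Nat.pow_le_pow_right (by omega) (by omega)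
        simp at this; omega
      simp [hd0]
    · -- d ≥ e ≥ 1
      have hkey : p ^ (d - e) * p ^ e = p ^ d := by
        rw [← pow_add, Nat.sub_add_cancel hge]
      have h1 : 1 ≤ p ^ (d - e) := Nat.one_le_pow _ _ (by omega)
      have h2 : 1 ≤ p ^ e := Nat.one_le_pow _ _ (by omega)
      have heq : p ^ d - 1 = p ^ (d - e) * (p ^ e - 1) + (p ^ (d - e) - 1) := by
        have : p ^ (d - e) * (p ^ e - 1) = p ^ (d - e) * p ^ e - p ^ (d - e) := by
          rw [Nat.mul_sub, mul_one]
        rw [this, hkey]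
        have : p ^ (d - e) ≤ p ^ d := by rw [← hkey]; nlinarith
        omega
      have hdvd2 : p ^ e - 1 ∣ p ^ (d - e) - 1 := by
        have : p ^ (d - e) - 1 = (p ^ d - 1) - p ^ (d - e) * (p ^ e - 1) := by omega
        rw [this]
        exact Nat.dvd_sub hdvd (Dvd.intro_left _ rfl)
      have hlt : d - e < d := by omega
      have := ih (d - e) hlt e hdvd2
      have : e ∣ (d - e) + e := Nat.dvd_add this dvd_rfl
      rwa [Nat.sub_add_cancel hge] at this


open Polynomial

/-- Let `p` be prime and `f ∈ (ℤ/pℤ)[x]` monic of degree `d ≥ 1`, let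
`A = (ℤ/pℤ)[x]/(f)` and `α` the image of `x` in `A`. If there are a ring automorphism
`σ` of `A` and `i` coprime to `d` with `σ^i α = α^p`, `σ^d α = α`, and
`σ^(d/ℓ) α - α` a unit of `A` for every prime `ℓ ∣ d`, then `f` is irreducible. -/
theorem stmt_11 (p : ℕ) (hp : Nat.Prime p) (d : ℕ) (hd : 1 ≤ d)
    (f : Polynomial (ZMod p)) (hmonic : f.Monic) (hdeg : f.natDegree = d)
    (σ : RingAut (Polynomial (ZMod p) ⧸ Ideal.span {f})) (i : ℕ) (hi : Nat.Coprime i d)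
    (hfrob : (σ ^ i) (Ideal.Quotient.mk (Ideal.span {f}) X) =
      (Ideal.Quotient.mk (Ideal.span {f}) X) ^ p)
    (hfix : (σ ^ d) (Ideal.Quotient.mk (Ideal.span {f}) X) =
      Ideal.Quotient.mk (Ideal.span {f}) X)
    (hunit : ∀ ℓ : ℕ, ℓ.Prime → ℓ ∣ d →
      IsUnit ((σ ^ (d / ℓ)) (Ideal.Quotient.mk (Ideal.span {f}) X) -
        Ideal.Quotient.mk (Ideal.span {f}) X)) :
    Irreducible f := by
  haveI := Fact.mk hp
  have hp2 : 2 ≤ p := hp.two_le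
  set α : Polynomial (ZMod p) ⧸ Ideal.span {f} := Ideal.Quotient.mk (Ideal.span {f}) X with hα
  have hfne : f ≠ 0 := hmonic.ne_zero
  have hfnu : ¬ IsUnit f := by
    intro h
    have := natDegree_eq_zero_of_isUnit h
    omega
  -- iterate lemmas
  have hmul : ∀ a b : ℕ, (σ ^ (a + b)) α = (σ ^ a) ((σ ^ b) α) := by
    intro a b; rw [pow_add]; rfl
  have hL1 : ∀ k, (σ ^ (d * k)) α = α := by
    intro k; induction k with
    | zero => rw [Nat.mul_zero, pow_zero]; rfl
    | succ k ih => rw [Nat.mul_succ, hmul, hfix, ih]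
  have hL2 : ∀ k, (σ ^ (i * k)) α = α ^ p ^ k := by
    intro k; induction k with
    | zero => rw [Nat.mul_zero, pow_zero, pow_zero, pow_one]; rfl
    | succ k ih =>
      rw [Nat.mul_succ, hmul, hfrob, map_pow, ih, ← pow_mul, ← pow_succ]
  have hαd : α ^ p ^ d = α := by
    have h1 := hL2 d
    rw [Nat.mul_comm, hL1 i] at h1
    exact h1.symm
  -- key claim: any monic irreducible factor of f has degree d
  have key : ∀ g : Polynomial (ZMod p), g.Monic → Irreducible g → g ∣ f → g.natDegree = d := by
    intro g hgm hgi hgdvd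
    haveI : Fact (Irreducible g) := ⟨hgi⟩
    have hg0 : g ≠ 0 := hgm.ne_zero
    have he1 : 1 ≤ g.natDegree := hgi.natDegree_pos
    set e := g.natDegree with he
    -- quotient map into the field AdjoinRoot g
    have hle : Ideal.span {f} ≤ Ideal.span {g} :=
      Ideal.span_singleton_le_span_singleton.mpr hgdvd
    let π : (Polynomial (ZMod p) ⧸ Ideal.span {f}) →+* AdjoinRoot g :=
      Ideal.Quotient.factor hle
    have hπα : π α = AdjoinRoot.root g := rfl
    set β := AdjoinRoot.root g with hβdef
    -- finiteness and cardinality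
    letI : Fintype (AdjoinRoot g) := Module.fintypeOfFintype (AdjoinRoot.powerBasisAux' hgm)
    have hcard : Fintype.card (AdjoinRoot g) = p ^ e := by
      rw [Module.card_fintype (AdjoinRoot.powerBasisAux' hgm), ZMod.card, Fintype.card_fin]
    -- characteristic
    haveI : CharP (AdjoinRoot g) p := charP_of_injective_algebraMap' (ZMod p) p
    -- beta is fixed by p^d power
    have hβd : β ^ p ^ d = β := by
      have := congrArg π hαd
      rwa [map_pow, hπα] at this
    -- every element is fixed by p^d power
    have hall : ∀ x : AdjoinRoot g, x ^ p ^ d = x := by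
      have hcomp : (frobenius (AdjoinRoot g) p ^ d).comp (AdjoinRoot.mk g) = AdjoinRoot.mk g := by
        apply Polynomial.ringHom_ext
        · intro a
          have h2 := RingHom.ext_zmod ((frobenius (AdjoinRoot g) p ^ d).comp
            (algebraMap (ZMod p) (AdjoinRoot g))) (algebraMap (ZMod p) (AdjoinRoot g))
          have := congrArg (fun φ => φ a) h2
          simpa [AdjoinRoot.mk_C] using this
        · show (frobenius (AdjoinRoot g) p ^ d) (AdjoinRoot.mk g X) = AdjoinRoot.mk g X
          rw [AdjoinRoot.mk_X]
          show (frobenius (AdjoinRoot g) p ^ d) β = β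
          rw [RingHom.coe_pow] at *
          calc (⇑(frobenius (AdjoinRoot g) p))^[d] β = β ^ p ^ d := iterate_frobenius p d β
            _ = β := hβd
      intro x
      obtain ⟨h, rfl⟩ := AdjoinRoot.mk_surjective x
      have := congrArg (fun φ => φ h) hcomp
      simp only [RingHom.comp_apply] at this
      calc AdjoinRoot.mk g h ^ p ^ d
          = (⇑(frobenius (AdjoinRoot g) p))^[d] (AdjoinRoot.mk g h) :=
            (iterate_frobenius p d (AdjoinRoot.mk g h)).symm
        _ = (frobenius (AdjoinRoot g) p ^ d) (AdjoinRoot.mk g h) := by rw [RingHom.coe_pow]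
        _ = AdjoinRoot.mk g h := this
    -- cyclic units give p^e - 1 ∣ p^d - 1
    have hdvd_card : p ^ e - 1 ∣ p ^ d - 1 := by
      obtain ⟨ζ, hζ⟩ := IsCyclic.exists_generator (α := (AdjoinRoot g)ˣ)
      have hord : orderOf ζ = Fintype.card (AdjoinRoot g)ˣ := by
        rw [orderOf_eq_card_of_forall_mem_zpowers hζ, Nat.card_eq_fintype_card]
      have hζpd : ζ ^ p ^ d = ζ := Units.ext (by simpa using hall ζ.val)
      have h1 : 1 ≤ p ^ d := Nat.one_le_pow _ _ (by omega)
      have hζ1 : ζ ^ (p ^ d - 1) = 1 := by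
        have : ζ ^ (p ^ d - 1) * ζ = 1 * ζ := by
          rw [one_mul, ← pow_succ, Nat.sub_add_cancel h1, hζpd]
        exact mul_right_cancel this
      have := orderOf_dvd_of_pow_eq_one hζ1
      rwa [hord, Fintype.card_units, hcard] at this
    have hed : e ∣ d := aux_pow_sub_one_dvd hp2 d e hdvd_card
    -- now show e = d
    by_contra hne
    have helt : e < d := lt_of_le_of_ne (Nat.le_of_dvd (by omega) hed) hne
    obtain ⟨q, hq⟩ := hed
    have hq2 : 2 ≤ q := by
      rcases Nat.lt_or_ge q 2 with h | h
      · interval_cases q <;> omega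
      · exact h
    set ℓ := q.minFac with hℓ
    have hℓp : ℓ.Prime := Nat.minFac_prime (by omega)
    have hℓq : ℓ ∣ q := Nat.minFac_dvd _
    have hℓd : ℓ ∣ d := by rw [hq]; exact Dvd.dvd.mul_left hℓq e
    set m := d / ℓ with hm
    have hem : e ∣ m := by
      obtain ⟨r, hr⟩ := hℓq
      refine ⟨r, ?_⟩
      rw [hm, hq, hr, show e * (ℓ * r) = (e * r) * ℓ by ring]
      rw [Nat.mul_div_cancel _ hℓp.pos]
    -- get j with i * j ≡ 1 mod d
    obtain ⟨j, -, hj⟩ := Nat.exists_mul_mod_eq_one_of_coprime hi (by omega)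
    obtain ⟨t, hij⟩ : ∃ t, i * j = d * t + 1 :=
      ⟨i * j / d, by rw [← hj]; exact (Nat.div_add_mod (i * j) d).symm⟩
    -- σ^m α = α ^ p ^ (j * m)
    have hσm : (σ ^ m) α = α ^ p ^ (j * m) := by
      have h1 := hL2 (j * m)
      have h2 : i * (j * m) = m + d * (t * m) := by
        rw [← mul_assoc, hij]; ring
      rw [h2, hmul, hL1] at h1
      exact h1
    -- the unit maps to zero in the field
    have hu := hunit ℓ hℓp hℓd
    rw [← hm, hσm] at hu
    have hπu := hu.map π
    have hzero : π (α ^ p ^ (j * m) - α) = 0 := by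
      obtain ⟨k, hk⟩ := hem.mul_left j
      have : β ^ p ^ (j * m) = β := by
        rw [hk, pow_mul, ← hcard]
        exact FiniteField.pow_card_pow _ _
      rw [map_sub, map_pow, hπα, this, sub_self]
    rw [hzero] at hπu
    exact not_isUnit_zero hπu
  -- conclude
  obtain ⟨g, hgm, hgi, hgdvd⟩ := f.exists_monic_irreducible_factor hfnu
  have hgd : g.natDegree = d := key g hgm hgi hgdvd
  obtain ⟨h, rfl⟩ := hgdvd
  have hhm : h.Monic := hgm.of_mul_monic_left hmonic
  have hh1 : h = 1 := by
    have hnd : (g * h).natDegree = g.natDegree + h.natDegree :=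
      natDegree_mul hgm.ne_zero hhm.ne_zero
    have : h.natDegree = 0 := by omega
    exact hhm.natDegree_eq_zero.mp this
  rw [hh1, mul_one]
  exact hgi
end

section
/- Let p and r be distinct primes, let Φ_r = 1 + x + x² + ⋯ + x^{r−1} ∈ (ℤ/pℤ)[x], let A = (ℤ/pℤ)[x]/(Φ_r), and let ζ denote the image of x in A. Let H be a proper subgroup of the multiplicative group (ℤ/rℤ)^×, and set η = ∑_{h ∈ H} ζ^{h}, where each h ∈ H is identified with its integer representative in {1, …, r − 1}. Then η does not lie in the image of the natural ring map ℤ/pℤ → A; that is, the Gaussian period η is not an element of ℤ/pℤ. -/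
open Polynomial

private lemma stmt12_aux (p r : ℕ) [Fact (Nat.Prime p)]
    (f : Polynomial (ZMod p)) (j : ℕ) (hj : j < r)
    (hdvd : (∑ i ∈ Finset.range r, (X : Polynomial (ZMod p)) ^ i) ∣ f)
    (hf0 : f ≠ 0) (hdeg : f.natDegree ≤ r - 1) (hcj : f.coeff j = 0) : False := by
  set q : Polynomial (ZMod p) := ∑ i ∈ Finset.range r, X ^ i with hqdef
  have hqc : ∀ k, k < r → q.coeff k = 1 := by
    intro k hk
    rw [hqdef, finset_sum_coeff]
    simp [coeff_X_pow, Finset.sum_ite_eq, hk]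
  have hq0 : q ≠ 0 := fun h => by simpa [h] using hqc 0 (by omega)
  have hqdeg : r - 1 ≤ q.natDegree :=
    le_natDegree_of_ne_zero (by rw [hqc (r-1) (by omega)]; exact one_ne_zero)
  obtain ⟨g, hg⟩ := hdvd
  have hg0 : g ≠ 0 := fun h => hf0 (by rw [hg, h, mul_zero])
  have hdm : f.natDegree = q.natDegree + g.natDegree := by rw [hg, natDegree_mul hq0 hg0]
  have hgd : g.natDegree = 0 := by omega
  obtain ⟨c0, rfl⟩ : ∃ c0, g = C c0 := ⟨g.coeff 0, eq_C_of_natDegree_eq_zero hgd⟩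
  have hc0 : c0 ≠ 0 := fun h => hg0 (by rw [h, map_zero])
  have : f.coeff j = c0 := by rw [hg, coeff_mul_C, hqc j hj, one_mul]
  exact hc0 (by rw [← this, hcj])

/-- Let `p` and `r` be distinct primes, `Φ_r = 1 + x + ⋯ + x^(r-1) ∈ (ℤ/pℤ)[x]`,
`A = (ℤ/pℤ)[x]/(Φ_r)`, and `ζ` the image of `x` in `A`. If `H` is a proper subgroup of
`(ℤ/rℤ)ˣ`, then the Gaussian period `η = ∑_{h ∈ H} ζ^h` (each `h` identified with its
integer representative in `{1, …, r-1}`) does not lie in the image of `ℤ/pℤ` in `A`. -/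
theorem stmt_12 (p r : ℕ) (hp : Nat.Prime p) (hr : Nat.Prime r) (hpr : p ≠ r)
    (H : Subgroup (ZMod r)ˣ) (hH : H ≠ ⊤) :
    (∑ᶠ h ∈ (H : Set (ZMod r)ˣ),
        (Ideal.Quotient.mk (Ideal.span {∑ i ∈ Finset.range r, (X : Polynomial (ZMod p)) ^ i})
          X) ^ (ZMod.val (h : ZMod r)))
      ∉ Set.range (algebraMap (ZMod p)
          (Polynomial (ZMod p) ⧸
            Ideal.span {∑ i ∈ Finset.range r, (X : Polynomial (ZMod p)) ^ i})) := by
  haveI : Fact (Nat.Prime p) := ⟨hp⟩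
  haveI : Fact (Nat.Prime r) := ⟨hr⟩
  haveI : Fact (1 < r) := ⟨hr.one_lt⟩
  haveI : NeZero r := ⟨hr.pos.ne'⟩
  rintro ⟨c, hc⟩
  set q : Polynomial (ZMod p) := ∑ i ∈ Finset.range r, X ^ i with hqdef
  obtain ⟨u, hu⟩ : ∃ u : (ZMod r)ˣ, u ∉ H := by
    by_contra h; push_neg at h; exact hH ((Subgroup.eq_top_iff' H).2 h)
  have hfin : (H : Set (ZMod r)ˣ).Finite := Set.toFinite _
  have hT : ((hfin.toFinset : Finset (ZMod r)ˣ) : Set (ZMod r)ˣ) = H := hfin.coe_toFinset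
  set T := hfin.toFinset with hTdef
  rw [← hT, finsum_mem_coe_finset] at hc
  have hinj : Function.Injective (fun h : (ZMod r)ˣ => (h : ZMod r).val) := by
    intro a b hab
    exact Units.ext (ZMod.val_injective r hab)
  set S : Finset ℕ := T.image (fun h : (ZMod r)ˣ => (h : ZMod r).val) with hSdef
  rw [← Finset.sum_image (fun a _ b _ h => hinj h)] at hc
  -- properties of S
  have hSlt : ∀ i ∈ S, i < r ∧ i ≠ 0 := by
    intro i hi
    obtain ⟨h, _, rfl⟩ := Finset.mem_image.mp hi
    refine ⟨ZMod.val_lt _, fun h0 => ?_⟩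
    exact h.ne_zero ((ZMod.val_eq_zero _).mp h0)
  have h1S : 1 ∈ S := by
    refine Finset.mem_image.mpr ⟨1, hfin.mem_toFinset.mpr H.one_mem, ?_⟩
    simp [ZMod.val_one]
  set j : ℕ := (u : ZMod r).val with hjdef
  have hjS : j ∉ S := by
    intro hjmem
    obtain ⟨h, hhT, hval⟩ := Finset.mem_image.mp hjmem
    exact hu (hinj hval ▸ hfin.mem_toFinset.mp hhT)
  have hj0 : j ≠ 0 := fun h0 => u.ne_zero ((ZMod.val_eq_zero _).mp h0)
  have hjr : j < r := ZMod.val_lt _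
  -- the polynomial f
  set f : Polynomial (ZMod p) := ∑ i ∈ S, X ^ i - C c with hfdef
  have hdvd : q ∣ f := by
    rw [← Ideal.mem_span_singleton, ← Ideal.Quotient.eq_zero_iff_mem]
    have halg : algebraMap (ZMod p) (Polynomial (ZMod p) ⧸ Ideal.span {q}) c
        = Ideal.Quotient.mk (Ideal.span {q}) (C c) := rfl
    rw [hfdef, map_sub, map_sum]
    simp only [map_pow]
    rw [← hc, halg, sub_self]
  have hcoeff : ∀ k, f.coeff k = (if k ∈ S then 1 else 0) - (if k = 0 then c else 0) := by
    intro k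
    rw [hfdef, coeff_sub, finset_sum_coeff, coeff_C]
    simp [coeff_X_pow, Finset.sum_ite_eq', eq_comm]
  have hf0 : f ≠ 0 := by
    intro h0
    have := hcoeff 1
    rw [h0] at this
    simp [h1S] at this
  have hdeg : f.natDegree ≤ r - 1 := by
    refine le_trans (natDegree_sub_le _ _) (max_le ?_ (by simp))
    refine natDegree_sum_le_of_forall_le _ _ fun i hi => ?_
    rw [natDegree_X_pow]
    have := hSlt i hi
    omega
  have hcj : f.coeff j = 0 := by rw [hcoeff j]; simp [hjS, hj0]
  exact stmt12_aux p r f j hjr hdvd hf0 hdeg hcj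
end
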